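/- arXiv:1310.3879 — 8 statements merged into one kernel-verified Lean document; each statement's English description precedes it below -/
import Mathlib

section
/- If a and b are integers satisfying a ≥ b > 1, then (a+1)^(a+1) · (b-1)^(b-1) > a^a · b^b. -/
private lemma bern (x : ℤ) (hx : 1 ≤ x) : ∀ k : ℕ, x^(k+1) - (k+1) * x^k ≤ (x-1)^(k+1) := by
  intro k
  induction k with
  | zero => simp
  | succ n ih =>
    have hx0 : (0:ℤ) ≤ x := by linarith
    have h1 : (x^(n+1) - (n+1) * x^n) * (x - 1) ≤ (x-1)^(n+1) * (x-1) :=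
      mul_le_mul_of_nonneg_right ih (by linarith)
    have hxn : (0:ℤ) ≤ ((n:ℤ)+1) * x ^ n := by positivity
    have expand : (x^(n+1) - ((n:ℤ)+1) * x^n) * (x - 1)
        = x^(n+1+1) - ((n:ℤ)+1+1)*x^(n+1) + ((n:ℤ)+1)*x^n := by ring
    calc x^(n+1+1) - (↑(n+1)+1)*x^(n+1)
        ≤ (x^(n+1) - (↑n+1) * x^n) * (x - 1) := by push_cast; rw [expand]; linarith
      _ ≤ (x-1)^(n+1) * (x-1) := h1
      _ = (x-1)^(n+1+1) := by ring

private lemma keyZ (j : ℕ) :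
    ((j:ℤ)+2)^(j+2) * ((j:ℤ)+2)^(j+2) < ((j:ℤ)+3)^(j+3) * ((j:ℤ)+1)^(j+1) := by
  have hj : (0:ℤ) ≤ (j:ℤ) := Int.natCast_nonneg j
  set x : ℤ := ((j:ℤ)+2)^2 with hxdef
  have hx1 : (1:ℤ) ≤ x := by nlinarith
  have hb := bern x hx1 j
  have hxj : (0:ℤ) < x ^ j := by positivity
  have hfac : (x - 1)^(j+1) = (((j:ℤ)+1)*((j:ℤ)+3))^(j+1) := by
    rw [hxdef]; ring_nf
  have h2 : ((j:ℤ)+3)^(j+3) * ((j:ℤ)+1)^(j+1)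
      = ((j:ℤ)+3)^2 * (((j:ℤ)+1)*((j:ℤ)+3))^(j+1) := by
    rw [mul_pow]; ring
  have h3 : ((j:ℤ)+3)^2 * (x^(j+1) - ((j:ℤ)+1) * x^j) ≤ ((j:ℤ)+3)^2 * (x-1)^(j+1) := by
    apply mul_le_mul_of_nonneg_left _ (by positivity)
    exact_mod_cast hb
  have h4 : ((j:ℤ)+3)^2 * (x^(j+1) - ((j:ℤ)+1) * x^j)
      = x^j * (((j:ℤ)+3)^2 * (x - ((j:ℤ)+1))) := by ring
  have h5 : x^(j+2) < x^j * (((j:ℤ)+3)^2 * (x - ((j:ℤ)+1))) := by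
    have hxx : x^(j+2) = x^j * x^2 := by ring
    rw [hxx]
    apply mul_lt_mul_of_pos_left _ hxj
    rw [hxdef]; nlinarith
  have h6 : ((j:ℤ)+2)^(j+2) * ((j:ℤ)+2)^(j+2) = x^(j+2) := by
    rw [hxdef, ← pow_mul, ← pow_add]; ring_nf
  calc ((j:ℤ)+2)^(j+2) * ((j:ℤ)+2)^(j+2) = x^(j+2) := h6
    _ < x^j * (((j:ℤ)+3)^2 * (x - ((j:ℤ)+1))) := h5
    _ = ((j:ℤ)+3)^2 * (x^(j+1) - ((j:ℤ)+1) * x^j) := h4.symm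
    _ ≤ ((j:ℤ)+3)^2 * (x-1)^(j+1) := h3
    _ = ((j:ℤ)+3)^2 * (((j:ℤ)+1)*((j:ℤ)+3))^(j+1) := by rw [hfac]
    _ = ((j:ℤ)+3)^(j+3) * ((j:ℤ)+1)^(j+1) := h2.symm

private lemma keyN (n : ℕ) (hn : 2 ≤ n) :
    n^n * n^n < (n+1)^(n+1) * (n-1)^(n-1) := by
  obtain ⟨j, rfl⟩ : ∃ j, n = j + 2 := ⟨n - 2, by omega⟩
  have h1 : j + 2 - 1 = j + 1 := by omega
  have h2 : j + 2 + 1 = j + 3 := by omega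
  rw [h1, h2]
  exact_mod_cast keyZ j

private lemma chainN (n m : ℕ) (hn : 2 ≤ n) (hnm : n < m) :
    (m-1)^(m-1) * n^n < m^m * (n-1)^(n-1) := by
  induction m, hnm using Nat.le_induction with
  | base =>
    have h1 : n + 1 - 1 = n := by omega
    rw [h1]
    calc n^n * n^n < (n+1)^(n+1) * (n-1)^(n-1) := keyN n hn
      _ = (n+1)^(n+1) * (n-1)^(n-1) := rfl
  | succ m hm ih =>
    obtain ⟨l, rfl⟩ : ∃ l, m = l + 1 := ⟨m - 1, by omega⟩
    have key := keyN (l+1) (by omega)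
    have h1 : l + 1 - 1 = l := by omega
    rw [h1] at ih key
    have h2 : l + 1 + 1 - 1 = l + 1 := by omega
    rw [h2]
    have hmul := Nat.mul_lt_mul'' key ih
    apply Nat.lt_of_mul_lt_mul_left (a := (l+1)^(l+1) * l^l)
    calc (l+1)^(l+1) * l^l * ((l+1)^(l+1) * n^n)
        = (l+1)^(l+1) * (l+1)^(l+1) * (l^l * n^n) := by ring
      _ < (l+1+1)^(l+1+1) * l^l * ((l+1)^(l+1) * (n-1)^(n-1)) := hmul
      _ = (l+1)^(l+1) * l^l * ((l+1+1)^(l+1+1) * (n-1)^(n-1)) := by ring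

/-- If `a` and `b` are integers satisfying `a ≥ b > 1`, then
`(a+1)^(a+1) * (b-1)^(b-1) > a^a * b^b`. -/
theorem exp_switch (a b : ℤ) (hb : 1 < b) (hab : b ≤ a) :
    a ^ a.toNat * b ^ b.toNat < (a + 1) ^ (a + 1).toNat * (b - 1) ^ (b - 1).toNat := by
  obtain ⟨A, rfl⟩ : ∃ A : ℕ, a = (A : ℤ) := ⟨a.toNat, by omega⟩
  obtain ⟨B, rfl⟩ : ∃ B : ℕ, b = (B : ℤ) := ⟨b.toNat, by omega⟩
  have hB : 2 ≤ B := by exact_mod_cast hb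
  have hBA : B ≤ A := by exact_mod_cast hab
  have e1 : ((A:ℤ)).toNat = A := Int.toNat_natCast A
  have e2 : ((B:ℤ)).toNat = B := Int.toNat_natCast B
  have e3 : ((A:ℤ)+1).toNat = A + 1 := by omega
  have e4 : ((B:ℤ)-1).toNat = B - 1 := by omega
  rw [e1, e2, e3, e4]
  have e5 : ((A:ℤ)+1) = ((A+1 : ℕ) : ℤ) := by push_cast; ring
  have e6 : ((B:ℤ)-1) = ((B-1 : ℕ) : ℤ) := by
    have : (1:ℤ) ≤ (B:ℤ) := by exact_mod_cast Nat.one_le_of_lt hB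
    push_cast [Nat.cast_sub (by omega : 1 ≤ B)]; ring
  rw [e5, e6]
  have main : (A+1-1)^(A+1-1) * B^B < (A+1)^(A+1) * (B-1)^(B-1) :=
    chainN B (A+1) hB (by omega)
  rw [Nat.add_sub_cancel] at main
  exact_mod_cast main
end

section
/- Let a and b be real numbers with a ≥ b > 1. Then the function f(x) = (a+x)^(a+x) · (b−x)^(b−x) is strictly increasing on the interval [0,1]; in particular, for all 0 ≤ x < y ≤ 1 one has (a+x)^(a+x)(b−x)^(b−x) < (a+y)^(a+y)(b−y)^(b−y). -/
open Real Set

/-- For real `a ≥ b > 1`, the function `x ↦ (a+x)^(a+x) * (b-x)^(b-x)` (real powers)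
is strictly increasing on `[0,1]`; in particular for `0 ≤ x < y ≤ 1` the stated strict
inequality holds. -/
theorem strictMonoOn_rpow_prod (a b : ℝ) (hb : 1 < b) (hab : b ≤ a) :
    StrictMonoOn (fun x : ℝ => (a + x) ^ (a + x) * (b - x) ^ (b - x)) (Icc 0 1) ∧
      ∀ x y : ℝ, 0 ≤ x → x < y → y ≤ 1 →
        (a + x) ^ (a + x) * (b - x) ^ (b - x) < (a + y) ^ (a + y) * (b - y) ^ (b - y) := by
  set g : ℝ → ℝ := fun x => (a + x) * Real.log (a + x) + (b - x) * Real.log (b - x) with hg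
  have hax : ∀ x ∈ Icc (0:ℝ) 1, 0 < a + x := fun x hx => by
    have := hx.1; nlinarith
  have hbx : ∀ x ∈ Icc (0:ℝ) 1, 0 < b - x := fun x hx => by
    have := hx.2; nlinarith
  have hderiv : ∀ x ∈ Icc (0:ℝ) 1,
      HasDerivAt g (Real.log (a + x) - Real.log (b - x)) x := by
    intro x hx
    have h1 : HasDerivAt (fun y : ℝ => a + y) 1 x := (hasDerivAt_id x).const_add a
    have h2 : HasDerivAt (fun y : ℝ => b - y) (-1) x := by
      simpa using (hasDerivAt_id x).const_sub b
    have hl1 : HasDerivAt (fun y : ℝ => Real.log (a + y)) (1 / (a + x)) x := by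
      simpa [Function.comp_def] using (Real.hasDerivAt_log (ne_of_gt (hax x hx))).comp x h1
    have hl2 : HasDerivAt (fun y : ℝ => Real.log (b - y)) (-(1 / (b - x))) x := by
      have := (Real.hasDerivAt_log (ne_of_gt (hbx x hx))).comp x h2
      simpa [div_eq_mul_inv, Function.comp_def] using this
    have hp1 := h1.mul hl1
    have hp2 := h2.mul hl2
    have := hp1.add hp2
    refine this.congr_deriv ?_
    have hane := ne_of_gt (hax x hx)
    have hbne := ne_of_gt (hbx x hx)
    field_simp
    ring
  have hcont : ContinuousOn g (Icc 0 1) := fun x hx =>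
    ((hderiv x hx).continuousAt).continuousWithinAt
  have hgmono : StrictMonoOn g (Icc 0 1) := by
    apply strictMonoOn_of_deriv_pos (convex_Icc 0 1) hcont
    intro x hx
    rw [interior_Icc] at hx
    have hx' : x ∈ Icc (0:ℝ) 1 := Ioo_subset_Icc_self hx
    rw [(hderiv x hx').deriv]
    have h1 : b - x < a + x := by nlinarith [hx.1, hx.2]
    have h2 := Real.log_lt_log (hbx x hx') h1
    linarith
  have hfeq : ∀ x ∈ Icc (0:ℝ) 1,
      (a + x) ^ (a + x) * (b - x) ^ (b - x) = Real.exp (g x) := by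
    intro x hx
    rw [Real.rpow_def_of_pos (hax x hx), Real.rpow_def_of_pos (hbx x hx),
      ← Real.exp_add, hg]
    ring_nf
  have hfmono : StrictMonoOn (fun x : ℝ => (a + x) ^ (a + x) * (b - x) ^ (b - x))
      (Icc 0 1) := by
    intro x hx y hy hxy
    simp only
    rw [hfeq x hx, hfeq y hy]
    exact Real.exp_lt_exp.mpr (hgmono hx hy hxy)
  refine ⟨hfmono, fun x y hx hxy hy => ?_⟩
  exact hfmono ⟨hx, by linarith⟩ ⟨by linarith, hy⟩ hxy
end

section
/- Fix an integer m ≥ 1, nonzero complex numbers A_1, …, A_m, and a complex number s. Then there are only finitely many tuples (k_1, k_2, …, k_m) of even integers with 4 ≤ k_1 < k_2 < ⋯ < k_m such that A_1·C_{k_1} + A_2·C_{k_2} + ⋯ + A_m·C_{k_m} = s. -/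
/-- The `q`-coefficient constant of the weight `k` Eisenstein series:
`C_k = (2πi)^k / ((k-1)! ζ(k))`. -/
noncomputable def eisC (k : ℕ) : ℂ :=
  (2 * Real.pi * Complex.I) ^ k / ((Nat.factorial (k - 1) : ℂ) * riemannZeta k)

open Real Filter

lemma zeta_abs_bounds {k : ℕ} (hk : 2 ≤ k) :
    1 ≤ ‖riemannZeta k‖ ∧ ‖riemannZeta k‖ ≤ 3 := by
  have h1 : riemannZeta k = ((∑' n : ℕ, 1 / (n : ℝ) ^ k : ℝ) : ℂ) := by
    rw [zeta_nat_eq_tsum_of_gt_one (by omega), Complex.ofReal_tsum]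
    push_cast
    rfl
  have hsum : Summable (fun n : ℕ => 1 / (n : ℝ) ^ k) :=
    summable_one_div_nat_pow.mpr hk
  have hsum2 : Summable (fun n : ℕ => 1 / (n : ℝ) ^ 2) :=
    summable_one_div_nat_pow.mpr one_lt_two
  have hnn : ∀ n : ℕ, 0 ≤ 1 / (n : ℝ) ^ k := fun n => by positivity
  have hlow : (1 : ℝ) ≤ ∑' n : ℕ, 1 / (n : ℝ) ^ k := by
    have := Summable.le_tsum hsum 1 (fun n _ => hnn n)
    simpa using this
  have hle : ∑' n : ℕ, 1 / (n : ℝ) ^ k ≤ ∑' n : ℕ, 1 / (n : ℝ) ^ 2 := by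
    refine Summable.tsum_le_tsum (fun n => ?_) hsum hsum2
    rcases Nat.eq_zero_or_pos n with h | h
    · subst h
      norm_num [zero_pow (by omega : k ≠ 0)]
    · apply one_div_le_one_div_of_le (by positivity)
      exact pow_le_pow_right₀ (by exact_mod_cast h) hk
  have hz2 : ∑' n : ℕ, 1 / (n : ℝ) ^ 2 = π ^ 2 / 6 := hasSum_zeta_two.tsum_eq
  have hpi : π ^ 2 / 6 ≤ 3 := by nlinarith [Real.pi_le_four, Real.pi_pos]
  rw [h1, Complex.norm_real, Real.norm_eq_abs, abs_of_nonneg (by linarith)]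
  constructor <;> linarith [hz2 ▸ hle]
open Real Filter

noncomputable def gbd (k : ℕ) : ℝ := (2 * π) ^ k / (Nat.factorial (k - 1) : ℝ)

lemma gbd_pos (k : ℕ) : 0 < gbd k := by
  unfold gbd
  positivity

lemma gbd_succ (n : ℕ) (hn : 1 ≤ n) : gbd (n + 1) = gbd n * ((2 * π) / n) := by
  unfold gbd
  rw [show n + 1 - 1 = n from rfl]
  obtain ⟨a, rfl⟩ := Nat.exists_eq_add_of_le hn
  rw [show 1 + a = a + 1 from by omega, Nat.add_sub_cancel, Nat.factorial_succ]
  have h1 : (Nat.factorial a : ℝ) ≠ 0 := Nat.cast_ne_zero.mpr (Nat.factorial_ne_zero a)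
  have h2 : ((a:ℝ) + 1) ≠ 0 := by positivity
  field_simp
  push_cast
  ring

lemma gbd_anti : ∀ a b : ℕ, 8 ≤ a → a ≤ b → gbd b ≤ gbd a := by
  intro a b ha hab
  induction b, hab using Nat.le_induction with
  | base => exact le_refl _
  | succ n hn ih =>
    have h1 : gbd (n + 1) = gbd n * ((2 * π) / n) := gbd_succ n (by omega)
    have h2 : (2 * π) / n ≤ 1 := by
      rw [div_le_one (by exact_mod_cast (by omega : 0 < n) : (0:ℝ) < n)]
      have : (8 : ℝ) ≤ n := by exact_mod_cast (by omega : 8 ≤ n)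
      nlinarith [Real.pi_le_four]
    calc gbd (n+1) ≤ gbd n * 1 := by rw [h1]; gcongr; · exact (gbd_pos n).le
      _ = gbd n := mul_one _
      _ ≤ gbd a := ih

lemma gbd_step (k : ℕ) (hk : 1 ≤ k) : gbd (k + 2) ≤ gbd k * (64 / (k:ℝ)^2) := by
  have h1 := gbd_succ k hk
  have h2 := gbd_succ (k+1) (by omega)
  rw [h2, h1]
  have hk' : (1:ℝ) ≤ k := by exact_mod_cast hk
  have hpi := Real.pi_le_four
  have hpi0 := Real.pi_pos
  rw [mul_assoc]
  gcongr gbd k * ?_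
  · exact (gbd_pos k).le
  have : ((k:ℝ)+1) ≥ (k:ℝ) := by linarith
  calc 2 * π / ↑k * (2 * π / ↑(k+1)) ≤ (8 / k) * (8 / k) := by
        push_cast
        gcongr <;> linarith
    _ = 64 / (k:ℝ)^2 := by field_simp; ring

lemma gbd_tendsto : Tendsto gbd atTop (nhds 0) := by
  have h := FloorSemiring.tendsto_pow_div_factorial_atTop (K := ℝ) (2 * π)
  have h2 : Tendsto (fun k : ℕ => (2*π)^(k-1) / (Nat.factorial (k-1) : ℝ)) atTop (nhds 0) :=
    h.comp (tendsto_sub_atTop_nat 1)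
  have h3 := h2.const_mul (2*π)
  rw [mul_zero] at h3
  apply h3.congr'
  filter_upwards [eventually_ge_atTop 1] with k hk
  unfold gbd
  obtain ⟨a, rfl⟩ := Nat.exists_eq_add_of_le hk
  rw [show 1 + a - 1 = a from by omega, show 1 + a = a + 1 from by omega, pow_succ]
  ring
lemma eisC_abs {k : ℕ} (hk : 2 ≤ k) :
    gbd k / 3 ≤ ‖eisC k‖ ∧ ‖eisC k‖ ≤ gbd k := by
  obtain ⟨hz1, hz3⟩ := zeta_abs_bounds hk
  have hf : (0:ℝ) < (Nat.factorial (k-1) : ℝ) := by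
    exact_mod_cast (Nat.factorial_pos _)
  have habs : ‖eisC k‖
      = (2*π)^k / ((Nat.factorial (k-1) : ℝ) * ‖riemannZeta k‖) := by
    unfold eisC
    rw [norm_div, norm_mul, norm_pow, norm_mul, norm_mul]
    simp [Complex.norm_real, abs_of_nonneg Real.pi_pos.le]
  have hzpos : (0:ℝ) < ‖riemannZeta k‖ := by linarith
  have hp : (0:ℝ) < (2*π)^k := by positivity
  constructor
  · rw [habs]
    unfold gbd
    rw [div_div]
    apply div_le_div_of_nonneg_left hp.le (by positivity)
    nlinarith
  · rw [habs]
    unfold gbd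
    apply div_le_div_of_nonneg_left hp.le (by positivity)
    nlinarith
lemma even_lt_le {a b : ℕ} (ha : Even a) (hb : Even b) (h : a < b) : a + 2 ≤ b := by
  obtain ⟨x, hx⟩ := ha; obtain ⟨y, hy⟩ := hb; omega

lemma bounded_head (m : ℕ) (A : Fin (m+1) → ℂ) (hA0 : A 0 ≠ 0) (s : ℂ) :
    ∃ B : ℕ, ∀ k : Fin (m+1) → ℕ, (∀ i, Even (k i) ∧ 4 ≤ k i) → StrictMono k →
      ∑ i, A i * eisC (k i) = s → k 0 ≤ B := by
  set M : ℝ := ∑ i, ‖A i‖ with hM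
  have hA0' : 0 < ‖A 0‖ := by
    simpa [norm_pos_iff] using hA0
  have hMA : ‖A 0‖ ≤ M := by
    apply Finset.single_le_sum (f := fun i => ‖A i‖) (fun i _ => by positivity)
    exact Finset.mem_univ 0
  have hM0 : 0 < M := lt_of_lt_of_le hA0' hMA
  -- generic estimates
  have main : ∀ k : Fin (m+1) → ℕ, (∀ i, Even (k i) ∧ 4 ≤ k i) → StrictMono k →
      8 ≤ k 0 →
      ‖∑ i, A i * eisC (k i)‖ ≤ M * gbd (k 0) ∧
      ‖A 0‖ * gbd (k 0) / 3 - M * (gbd (k 0) * (64 / ((k 0 : ℝ))^2)) ≤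
        ‖∑ i, A i * eisC (k i)‖ := by
    intro k hk hmono h8
    set n := k 0 with hn
    have hki : ∀ i, n ≤ k i := fun i => hmono.monotone (Fin.zero_le i)
    have hgk : ∀ i, ‖eisC (k i)‖ ≤ gbd n := fun i =>
      le_trans (eisC_abs (by have := (hk i).2; omega)).2 (gbd_anti n (k i) h8 (hki i))
    have htail : ∀ i : Fin m, n + 2 ≤ k i.succ := fun i =>
      even_lt_le (hk 0).1 (hk i.succ).1 (hmono (Fin.succ_pos i))
    constructor
    · calc ‖∑ i, A i * eisC (k i)‖ ≤ ∑ i, ‖A i * eisC (k i)‖ :=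
            norm_sum_le _ _
        _ = ∑ i, ‖A i‖ * ‖eisC (k i)‖ := by simp [norm_mul]
        _ ≤ ∑ i, ‖A i‖ * gbd n := by
            apply Finset.sum_le_sum; intro i _
            exact mul_le_mul_of_nonneg_left (hgk i) (by positivity)
        _ = M * gbd n := by rw [← Finset.sum_mul]
    · have hsplit : ∑ i, A i * eisC (k i)
          = A 0 * eisC (k 0) + ∑ i : Fin m, A i.succ * eisC (k i.succ) :=
        Fin.sum_univ_succ _
      have htailbd : ‖∑ i : Fin m, A i.succ * eisC (k i.succ)‖
          ≤ M * (gbd n * (64 / ((n : ℝ))^2)) := by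
        have hstep : gbd (n + 2) ≤ gbd n * (64 / ((n : ℝ))^2) := gbd_step n (by omega)
        calc ‖∑ i : Fin m, A i.succ * eisC (k i.succ)‖
            ≤ ∑ i : Fin m, ‖A i.succ‖ * ‖eisC (k i.succ)‖ := by
              refine le_trans (norm_sum_le _ _) ?_
              simp [norm_mul]
          _ ≤ ∑ i : Fin m, ‖A i.succ‖ * (gbd n * (64 / ((n : ℝ))^2)) := by
              apply Finset.sum_le_sum; intro i _
              apply mul_le_mul_of_nonneg_left _ (by positivity)
              refine le_trans (eisC_abs (by have := (hk i.succ).2; omega)).2 ?_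
              exact le_trans (gbd_anti (n+2) (k i.succ) (by omega) (htail i)) hstep
          _ = (∑ i : Fin m, ‖A i.succ‖) * (gbd n * (64 / ((n : ℝ))^2)) := by
              rw [Finset.sum_mul]
          _ ≤ M * (gbd n * (64 / ((n : ℝ))^2)) := by
              apply mul_le_mul_of_nonneg_right _ (by have := gbd_pos n; positivity)
              rw [hM, Fin.sum_univ_succ]
              exact le_add_of_nonneg_left (by positivity)
      have hhead : ‖A 0‖ * gbd n / 3 ≤ ‖A 0 * eisC (k 0)‖ := by
        rw [norm_mul]
        rw [mul_div_assoc]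
        apply mul_le_mul_of_nonneg_left _ hA0'.le
        exact (eisC_abs (by omega)).1
      calc ‖A 0‖ * gbd n / 3 - M * (gbd n * (64 / ((n : ℝ))^2))
          ≤ ‖A 0 * eisC (k 0)‖
            - ‖∑ i : Fin m, A i.succ * eisC (k i.succ)‖ := by
            apply sub_le_sub hhead htailbd
        _ ≤ ‖∑ i, A i * eisC (k i)‖ := by
            rw [hsplit]
            exact le_trans (sub_le_iff_le_add.mpr (by
              simpa using norm_add_le (A 0 * eisC (k 0) + ∑ i : Fin m, A i.succ * eisC (k i.succ)) (-(∑ i : Fin m, A i.succ * eisC (k i.succ))))) (le_of_eq (by ring_nf))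
  rcases eq_or_ne s 0 with hs | hs
  · obtain ⟨N, hN⟩ := exists_nat_gt (192 * M / ‖A 0‖)
    refine ⟨max 8 N, fun k hk hmono hsum => ?_⟩
    by_contra hB
    push_neg at hB
    have h8 : 8 ≤ k 0 := le_trans (le_max_left 8 N) hB.le
    obtain ⟨_, hlow⟩ := main k hk hmono h8
    rw [hsum, hs, norm_zero] at hlow
    have h1 : ‖A 0‖ * gbd (k 0) / 3 ≤ M * (gbd (k 0) * (64 / ((k 0 : ℝ))^2)) := by
      linarith
    have hg := gbd_pos (k 0)
    have hnR : (8:ℝ) ≤ (k 0 : ℕ) := by exact_mod_cast h8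
    have hNn : (N:ℝ) < (k 0 : ℕ) := by exact_mod_cast lt_of_le_of_lt (le_max_right 8 N) hB
    have hNc : 192 * M < N * ‖A 0‖ := by
      rw [div_lt_iff₀ hA0'] at hN
      linarith
    have hsq : (0:ℝ) < ((k 0 : ℝ))^2 := by positivity
    have h1' : ‖A 0‖ * gbd (k 0) / 3 ≤ M * gbd (k 0) * 64 / ((k 0 : ℝ))^2 := by
      have e : M * (gbd (k 0) * (64 / ((k 0 : ℝ))^2)) = M * gbd (k 0) * 64 / ((k 0 : ℝ))^2 := by
        ring
      rw [e] at h1; exact h1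
    rw [div_le_div_iff₀ (by norm_num) hsq] at h1'
    have h2 : ‖A 0‖ * ((k 0 : ℝ))^2 ≤ 192 * M := by nlinarith
    have hnn : ((k 0 : ℝ)) ≤ ((k 0 : ℝ))^2 := by nlinarith
    have c1 : (N:ℝ) * ‖A 0‖ < (k 0 : ℝ) * ‖A 0‖ :=
      mul_lt_mul_of_pos_right hNn hA0'
    have c2 : (k 0 : ℝ) * ‖A 0‖ ≤ ((k 0 : ℝ))^2 * ‖A 0‖ :=
      mul_le_mul_of_nonneg_right hnn hA0'.le
    linarith
  · have habs : 0 < ‖s‖ := by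
      simpa [norm_pos_iff] using hs
    have h0 : Tendsto (fun n : ℕ => M * gbd n) atTop (nhds 0) := by
      simpa using gbd_tendsto.const_mul M
    obtain ⟨B1, hB1⟩ := eventually_atTop.mp (h0.eventually_lt_const habs)
    refine ⟨max 8 B1, fun k hk hmono hsum => ?_⟩
    by_contra hB
    push_neg at hB
    have h8 : 8 ≤ k 0 := le_trans (le_max_left 8 B1) hB.le
    obtain ⟨hup, _⟩ := main k hk hmono h8
    rw [hsum] at hup
    have := hB1 (k 0) (le_trans (le_max_right 8 B1) hB.le)
    linarith
lemma aux_finite : ∀ (m : ℕ) (A : Fin m → ℂ), (∀ i, A i ≠ 0) → ∀ s : ℂ,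
    {k : Fin m → ℕ | (∀ i, Even (k i) ∧ 4 ≤ k i) ∧ StrictMono k ∧
      ∑ i, A i * eisC (k i) = s}.Finite := by
  intro m
  induction m with
  | zero => intro A hA s; exact Set.toFinite _
  | succ m ih =>
    intro A hA s
    obtain ⟨B, hB⟩ := bounded_head m A (hA 0) s
    have hsub : {k : Fin (m+1) → ℕ | (∀ i, Even (k i) ∧ 4 ≤ k i) ∧ StrictMono k ∧
        ∑ i, A i * eisC (k i) = s} ⊆
        ⋃ j ∈ Finset.range (B+1),
          {k : Fin (m+1) → ℕ | ((∀ i, Even (k i) ∧ 4 ≤ k i) ∧ StrictMono k ∧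
            ∑ i, A i * eisC (k i) = s) ∧ k 0 = j} := by
      intro k hk
      simp only [Set.mem_iUnion, Finset.mem_range, Set.mem_setOf_eq]
      exact ⟨k 0, by
        have := hB k hk.1 hk.2.1 hk.2.2
        omega, hk, rfl⟩
    apply Set.Finite.subset _ hsub
    apply Set.Finite.biUnion (Finset.finite_toSet _)
    intro j _
    have hT := ih (fun i => A i.succ) (fun i => hA i.succ) (s - A 0 * eisC j)
    apply Set.Finite.of_finite_image (f := Fin.tail) ?_ ?_
    · apply hT.subset
      rintro t ⟨k, ⟨⟨hk1, hk2, hk3⟩, hk0⟩, rfl⟩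
      refine ⟨fun i => hk1 i.succ, ?_, ?_⟩
      · intro a b hab
        exact hk2 (Fin.succ_lt_succ_iff.mpr hab)
      · rw [Fin.sum_univ_succ] at hk3
        have : Fin.tail k = fun i : Fin m => k i.succ := rfl
        rw [this, ← hk0]
        have : ∑ i : Fin m, A i.succ * eisC (k i.succ) = s - A 0 * eisC (k 0) := by
          rw [← hk3]; ring
        exact this
    · intro k hk k' hk' htail
      funext i
      refine Fin.cases ?_ ?_ i
      · rw [hk.2, hk'.2]
      · intro j'
        exact congrFun htail j'

/-- For fixed nonzero `A_1, …, A_m ∈ ℂ` and fixed `s ∈ ℂ`, there are only finitely many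
tuples `(k_1 < k_2 < ⋯ < k_m)` of even integers `≥ 4` with
`A_1 C_{k_1} + ⋯ + A_m C_{k_m} = s`. -/
theorem finitely_many_eisC_relations (m : ℕ) (hm : 1 ≤ m) (A : Fin m → ℂ)
    (hA : ∀ i, A i ≠ 0) (s : ℂ) :
    {k : Fin m → ℕ | (∀ i, Even (k i) ∧ 4 ≤ k i) ∧ StrictMono k ∧
      ∑ i, A i * eisC (k i) = s}.Finite :=
  aux_finite m A hA s
end

section
/- Fix positive integers n and m. There exists a real number B(n,m), depending only on n and m, such that for every tuple of even integers k_1, …, k_m with each k_i ≥ 4, the n-th coefficient of the Cauchy convolution e_{k_1} ∗ e_{k_2} ∗ ⋯ ∗ e_{k_m} satisfies |(e_{k_1} ∗ ⋯ ∗ e_{k_m})(n)| ≤ B(n,m). -/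
/-- The `q`-expansion of the normalized weight `k` Eisenstein series, as a formal power
series: constant coefficient `1`, and `n`-th coefficient `C_k σ_{k-1}(n)` for `n ≥ 1`. -/
noncomputable def eisPS (k : ℕ) : PowerSeries ℂ :=
  PowerSeries.mk fun n => if n = 0 then 1 else eisC k * ∑ d ∈ n.divisors, (d : ℂ) ^ (k - 1)

lemma one_le_abs_zeta {k : ℕ} (hk : 1 < k) : 1 ≤ ‖riemannZeta k‖ := by
  rw [zeta_nat_eq_tsum_of_gt_one hk]
  have hsum : Summable fun n : ℕ => 1 / (n : ℝ) ^ k :=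
    Real.summable_one_div_nat_pow.mpr hk
  have hcast : (∑' n : ℕ, 1 / (n : ℂ) ^ k) = ((∑' n : ℕ, 1 / (n : ℝ) ^ k : ℝ) : ℂ) := by
    rw [Complex.ofReal_tsum]
    push_cast
    rfl
  rw [hcast, Complex.norm_real, Real.norm_eq_abs]
  have h1 : (1 : ℝ) ≤ ∑' n : ℕ, 1 / (n : ℝ) ^ k := by
    have := hsum.le_tsum 1 (fun i _ => by positivity)
    simpa using this
  calc (1:ℝ) ≤ ∑' n : ℕ, 1 / (n : ℝ) ^ k := h1
    _ ≤ |∑' n : ℕ, 1 / (n : ℝ) ^ k| := le_abs_self _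

lemma eis_coeff_bound (n : ℕ) {k : ℕ} (hk : 4 ≤ k) {j : ℕ} (hj : j ≤ n) :
    ‖PowerSeries.coeff j (eisPS k)‖ ≤
      max 1 (2 * Real.pi * n * Real.exp (2 * Real.pi * n)) := by
  rw [eisPS, PowerSeries.coeff_mk]
  rcases eq_or_ne j 0 with rfl | hj0
  · simp
  · rw [if_neg hj0]
    refine le_trans ?_ (le_max_right _ _)
    rw [norm_mul]
    have hπ : (0:ℝ) < Real.pi := Real.pi_pos
    have habsC : ‖eisC k‖ ≤ (2 * Real.pi) ^ k / (Nat.factorial (k - 1)) := by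
      have h1 : (1:ℝ) ≤ ‖riemannZeta k‖ := one_le_abs_zeta (by omega)
      have hfac : (0:ℝ) < (Nat.factorial (k-1) : ℝ) := by positivity
      rw [eisC, norm_div, norm_pow, norm_mul, norm_mul, norm_mul]
      simp only [Complex.norm_two, Complex.norm_real, Complex.norm_I, mul_one, Real.norm_eq_abs,
        abs_of_pos hπ, Complex.norm_natCast]
      gcongr (2 * Real.pi) ^ k / ?_
      nlinarith
    have hsig : ‖∑ d ∈ j.divisors, (d : ℂ) ^ (k - 1)‖ ≤ (n:ℝ) ^ k := by
      calc ‖∑ d ∈ j.divisors, (d : ℂ) ^ (k - 1)‖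
          ≤ ∑ d ∈ j.divisors, ‖(d : ℂ) ^ (k - 1)‖ :=
            norm_sum_le _ _
        _ = ∑ d ∈ j.divisors, (d : ℝ) ^ (k - 1) := by
            simp [map_pow]
        _ ≤ ∑ _d ∈ j.divisors, (n : ℝ) ^ (k - 1) := by
            refine Finset.sum_le_sum fun d hd => ?_
            have hd' : d ≤ j := Nat.le_of_dvd (Nat.pos_of_ne_zero hj0)
              (Nat.mem_divisors.1 hd).1
            exact pow_le_pow_left₀ (by positivity) (by exact_mod_cast hd'.trans hj) _
        _ = (j.divisors.card : ℝ) * (n : ℝ) ^ (k - 1) := by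
            rw [Finset.sum_const, nsmul_eq_mul]
        _ ≤ (n : ℝ) * (n : ℝ) ^ (k - 1) := by
            have hsub : j.divisors ⊆ Finset.Icc 1 j := fun d hd => by
              have h := Nat.mem_divisors.1 hd
              refine Finset.mem_Icc.2 ⟨Nat.one_le_iff_ne_zero.2 fun h0 => ?_,
                Nat.le_of_dvd (Nat.pos_of_ne_zero hj0) h.1⟩
              subst h0
              exact hj0 (Nat.eq_zero_of_zero_dvd h.1)
            have hcard : j.divisors.card ≤ n := by
              calc j.divisors.card ≤ (Finset.Icc 1 j).card := Finset.card_le_card hsub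
                _ = j := by rw [Nat.card_Icc]; omega
                _ ≤ n := hj
            exact mul_le_mul_of_nonneg_right (by exact_mod_cast hcard) (by positivity)
        _ = (n : ℝ) ^ k := by
            rw [← pow_succ']
            congr 1
            omega
    calc ‖eisC k‖ * ‖∑ d ∈ j.divisors, (d : ℂ) ^ (k - 1)‖
        ≤ ((2 * Real.pi) ^ k / (Nat.factorial (k - 1))) * (n:ℝ) ^ k := by
          exact mul_le_mul habsC hsig (by positivity) (by positivity)
      _ = (2 * Real.pi * n) * ((2 * Real.pi * n) ^ (k-1) / (Nat.factorial (k - 1))) := by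
          have hk1 : k = (k - 1) + 1 := by omega
          rw [hk1]
          push_cast
          ring
      _ ≤ (2 * Real.pi * n) * Real.exp (2 * Real.pi * n) := by
          have h := Real.pow_div_factorial_le_exp (x := 2 * Real.pi * n) (by positivity) (k-1)
          have h2 : (0:ℝ) ≤ 2 * Real.pi * n := by positivity
          nlinarith [Real.exp_pos (2 * Real.pi * (n:ℝ))]

/-- For fixed `n, m ≥ 1`, the `n`-th coefficient of a product (Cauchy convolution) of any
`m` Eisenstein `q`-expansions of even weights `≥ 4` is bounded by a constant `B(n,m)`
depending only on `n` and `m`. -/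
theorem eis_product_coeff_bounded (n m : ℕ) (hn : 0 < n) (hm : 0 < m) :
    ∃ B : ℝ, ∀ k : Fin m → ℕ, (∀ i, Even (k i) ∧ 4 ≤ k i) →
      ‖PowerSeries.coeff (R := ℂ) n (∏ i, eisPS (k i))‖ ≤ B := by
  classical
  set C : ℝ := max 1 (2 * Real.pi * n * Real.exp (2 * Real.pi * n)) with hC
  have hC0 : 0 ≤ C := le_trans zero_le_one (le_max_left _ _)
  refine ⟨((Finset.univ : Finset (Fin m)).finsuppAntidiag n).card * C ^ m, fun k hk => ?_⟩
  rw [PowerSeries.coeff_prod]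
  calc ‖∑ l ∈ (Finset.univ : Finset (Fin m)).finsuppAntidiag n,
          ∏ i, PowerSeries.coeff (l i) (eisPS (k i))‖
      ≤ ∑ l ∈ (Finset.univ : Finset (Fin m)).finsuppAntidiag n,
          ‖∏ i, PowerSeries.coeff (l i) (eisPS (k i))‖ :=
        norm_sum_le _ _
    _ ≤ ∑ _l ∈ (Finset.univ : Finset (Fin m)).finsuppAntidiag n, C ^ m := by
        refine Finset.sum_le_sum fun l hl => ?_
        rw [norm_prod]
        have hli : ∀ i : Fin m, l i ≤ n := by
          intro i
          rw [Finset.mem_finsuppAntidiag] at hl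
          have h := Finset.single_le_sum (f := fun j : Fin m => l j)
            (fun j _ => Nat.zero_le _) (Finset.mem_univ i)
          simpa [hl.1] using h

        calc ∏ i, ‖PowerSeries.coeff (l i) (eisPS (k i))‖
            ≤ ∏ _i : Fin m, C := by
              refine Finset.prod_le_prod (fun i _ => by positivity) fun i _ => ?_
              exact eis_coeff_bound n (hk i).2 (hli i)
          _ = C ^ m := by simp
    _ = ((Finset.univ : Finset (Fin m)).finsuppAntidiag n).card * C ^ m := by
        rw [Finset.sum_const, nsmul_eq_mul]
end

section
/- Let ℓ be a real number with ℓ ≥ 24. Then for every real x with 12 ≤ x ≤ ℓ − 12, one has (x/ℓ)^{x/2} · ((ℓ−x)/ℓ)^{(ℓ−x)/2} ≤ (12/ℓ)^{6} · ((ℓ−12)/ℓ)^{(ℓ−12)/2}; that is, on the interval [12, ℓ−12] the function x ↦ (x/ℓ)^{x/2}((ℓ−x)/ℓ)^{(ℓ−x)/2} is maximized at the endpoints x = 12 and x = ℓ − 12. -/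
open Real Set

private lemma convF (ℓ : ℝ) :
    ConvexOn ℝ (Icc (12:ℝ) (ℓ - 12)) (fun x => x * log x + (ℓ - x) * log (ℓ - x)) := by
  have h1 : ConvexOn ℝ (Icc (12:ℝ) (ℓ - 12)) (fun x => x * log x) :=
    Real.convexOn_mul_log.subset (fun y hy => le_trans (by norm_num) hy.1) (convex_Icc _ _)
  have h2 : ConvexOn ℝ (Icc (12:ℝ) (ℓ - 12)) (fun x => (ℓ - x) * log (ℓ - x)) := by
    have := Real.convexOn_mul_log.comp_affineMap
      (AffineMap.const ℝ ℝ ℓ - AffineMap.id ℝ ℝ)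
    refine this.subset (fun y hy => ?_) (convex_Icc _ _)
    simp only [Set.mem_preimage, AffineMap.coe_sub, AffineMap.coe_const, AffineMap.coe_id,
      Pi.sub_apply, Function.const_apply, id_eq, Set.mem_Ici]
    linarith [hy.2]
  exact h1.add h2

/-- For real `ℓ ≥ 24`, the function `x ↦ (x/ℓ)^(x/2) ((ℓ-x)/ℓ)^((ℓ-x)/2)` on
`[12, ℓ - 12]` is maximized at the endpoints `x = 12` and `x = ℓ - 12`. -/
theorem rpow_ratio_max (ℓ : ℝ) (hℓ : 24 ≤ ℓ) (x : ℝ) (hx : 12 ≤ x) (hxℓ : x ≤ ℓ - 12) :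
    (x / ℓ) ^ (x / 2) * ((ℓ - x) / ℓ) ^ ((ℓ - x) / 2) ≤
      (12 / ℓ) ^ (6 : ℝ) * ((ℓ - 12) / ℓ) ^ ((ℓ - 12) / 2) := by
  have hℓ0 : (0:ℝ) < ℓ := by linarith
  have hx0 : (0:ℝ) < x := by linarith
  have hlx0 : (0:ℝ) < ℓ - x := by linarith
  have h12 : (0:ℝ) < ℓ - 12 := by linarith
  have key : x * log x + (ℓ - x) * log (ℓ - x) ≤ 12 * log 12 + (ℓ - 12) * log (ℓ - 12) := by
    have hseg : x ∈ segment ℝ (12:ℝ) (ℓ - 12) := by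
      rw [segment_eq_Icc (by linarith)]; exact ⟨hx, hxℓ⟩
    have h := (convF ℓ).le_on_segment (x := (12:ℝ)) (y := ℓ - 12)
      ⟨le_refl _, by linarith⟩ ⟨by linarith, le_refl _⟩ hseg
    simp only [sub_sub_cancel] at h
    have : max (12 * log 12 + (ℓ - 12) * log (ℓ - 12))
        ((ℓ - 12) * log (ℓ - 12) + 12 * log 12) =
        12 * log 12 + (ℓ - 12) * log (ℓ - 12) := by
      rw [add_comm ((ℓ - 12) * log (ℓ - 12)), max_self]
    rw [this] at h
    exact h
  have expand : ∀ y : ℝ, 0 < y → y < ℓ →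
      (y / ℓ) ^ (y / 2) * ((ℓ - y) / ℓ) ^ ((ℓ - y) / 2) =
        Real.exp ((y * log y + (ℓ - y) * log (ℓ - y)) / 2 - ℓ / 2 * log ℓ) := by
    intro y hy0 hyℓ
    have hly : 0 < ℓ - y := by linarith
    rw [Real.rpow_def_of_pos (by positivity), Real.rpow_def_of_pos (by positivity),
      ← Real.exp_add]
    congr 1
    rw [Real.log_div (ne_of_gt hy0) (ne_of_gt hℓ0),
      Real.log_div (ne_of_gt hly) (ne_of_gt hℓ0)]
    ring
  rw [expand x hx0 (by linarith)]
  have e2 : (12 / ℓ) ^ (6 : ℝ) * ((ℓ - 12) / ℓ) ^ ((ℓ - 12) / 2) =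
      Real.exp ((12 * log 12 + (ℓ - 12) * log (ℓ - 12)) / 2 - ℓ / 2 * log ℓ) := by
    rw [← expand 12 (by norm_num) (by linarith)]; norm_num
  rw [e2]
  exact Real.exp_le_exp.mpr (by linarith)
end

section
/- Let p be an odd prime, r a positive integer, and A_1, …, A_r complex numbers with S = |A_1| + ⋯ + |A_r| satisfying p > S² + S. Let ℓ be a real number, and let b_1, …, b_r and c_1, …, c_r be complex numbers satisfying |b_i| ≤ p^{ℓ/2 − 1} and |c_i| ≤ p^{ℓ − 2} for every i. Then (Σ_{i=1}^r A_i b_i)² − Σ_{i=1}^r A_i c_i ≠ p^{ℓ−1}. -/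
/-- Let `p` be an odd prime, `A_1, …, A_r ∈ ℂ` with `S = ∑ |A_i|` satisfying
`p > S² + S`, and suppose `|b_i| ≤ p^(ℓ/2 - 1)` and `|c_i| ≤ p^(ℓ-2)`. Then the Hecke
relation value `(∑ A_i b_i)² - ∑ A_i c_i` cannot equal `p^(ℓ-1)`. -/
theorem hecke_relation_fails (p : ℕ) (hp : Nat.Prime p) (hodd : Odd p)
    (r : ℕ) (hr : 0 < r) (A b c : Fin r → ℂ) (ℓ : ℝ)
    (hpS : (∑ i, ‖A i‖) ^ 2 + (∑ i, ‖A i‖) < (p : ℝ))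
    (hb : ∀ i, ‖b i‖ ≤ (p : ℝ) ^ (ℓ / 2 - 1))
    (hc : ∀ i, ‖c i‖ ≤ (p : ℝ) ^ (ℓ - 2)) :
    (∑ i, A i * b i) ^ 2 - ∑ i, A i * c i ≠ (((p : ℝ) ^ (ℓ - 1) : ℝ) : ℂ) := by
  intro h
  set S := ∑ i, ‖A i‖ with hSdef
  have hp0 : (0 : ℝ) < p := by exact_mod_cast hp.pos
  have hS0 : 0 ≤ S := Finset.sum_nonneg fun i _ => norm_nonneg _
  have hpow1 : (0 : ℝ) < (p : ℝ) ^ (ℓ / 2 - 1) := Real.rpow_pos_of_pos hp0 _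
  have hpow2 : (0 : ℝ) < (p : ℝ) ^ (ℓ - 2) := Real.rpow_pos_of_pos hp0 _
  have h1 : ‖∑ i, A i * b i‖ ≤ S * (p : ℝ) ^ (ℓ / 2 - 1) := by
    calc ‖∑ i, A i * b i‖ ≤ ∑ i, ‖A i * b i‖ :=
          norm_sum_le _ _
      _ ≤ ∑ i, ‖A i‖ * (p : ℝ) ^ (ℓ / 2 - 1) := by
          refine Finset.sum_le_sum fun i _ => ?_
          rw [norm_mul]
          exact mul_le_mul_of_nonneg_left (hb i) (norm_nonneg _)
      _ = S * (p : ℝ) ^ (ℓ / 2 - 1) := by rw [← Finset.sum_mul]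
  have h2 : ‖∑ i, A i * c i‖ ≤ S * (p : ℝ) ^ (ℓ - 2) := by
    calc ‖∑ i, A i * c i‖ ≤ ∑ i, ‖A i * c i‖ :=
          norm_sum_le _ _
      _ ≤ ∑ i, ‖A i‖ * (p : ℝ) ^ (ℓ - 2) := by
          refine Finset.sum_le_sum fun i _ => ?_
          rw [norm_mul]
          exact mul_le_mul_of_nonneg_left (hc i) (norm_nonneg _)
      _ = S * (p : ℝ) ^ (ℓ - 2) := by rw [← Finset.sum_mul]
  have hsq : (p : ℝ) ^ (ℓ / 2 - 1) * (p : ℝ) ^ (ℓ / 2 - 1) = (p : ℝ) ^ (ℓ - 2) := by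
    rw [← Real.rpow_add hp0]; ring_nf
  have hmul : (p : ℝ) * (p : ℝ) ^ (ℓ - 2) = (p : ℝ) ^ (ℓ - 1) := by
    nth_rewrite 1 [← Real.rpow_one (p : ℝ)]
    rw [← Real.rpow_add hp0]; ring_nf
  have key : ‖(∑ i, A i * b i) ^ 2 - ∑ i, A i * c i‖ < (p : ℝ) ^ (ℓ - 1) := by
    calc ‖(∑ i, A i * b i) ^ 2 - ∑ i, A i * c i‖
        ≤ (‖∑ i, A i * b i‖) ^ 2 + ‖∑ i, A i * c i‖ := by
          rw [← norm_pow, sub_eq_add_neg, ← norm_neg (∑ i, A i * c i)]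
          exact norm_add_le ((∑ i, A i * b i) ^ 2) (-(∑ i, A i * c i))
      _ ≤ (S * (p : ℝ) ^ (ℓ / 2 - 1)) ^ 2 + S * (p : ℝ) ^ (ℓ - 2) :=
          add_le_add (pow_le_pow_left₀ (norm_nonneg _) h1 2) h2
      _ = (S ^ 2 + S) * (p : ℝ) ^ (ℓ - 2) := by
          rw [mul_pow, sq ((p : ℝ) ^ (ℓ / 2 - 1)), hsq]; ring
      _ < (p : ℝ) * (p : ℝ) ^ (ℓ - 2) := by
          exact mul_lt_mul_of_pos_right hpS hpow2
      _ = (p : ℝ) ^ (ℓ - 1) := hmul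
  have habs : ‖(∑ i, A i * b i) ^ 2 - ∑ i, A i * c i‖ = (p : ℝ) ^ (ℓ - 1) := by
    rw [h, Complex.norm_real, Real.norm_eq_abs, abs_of_pos (Real.rpow_pos_of_pos hp0 _)]
  exact absurd habs (ne_of_lt key)
end

section
/- For every positive integer n, σ_7(n) = σ_3(n) + 120 · Σ_{j=1}^{n−1} σ_3(j) · σ_3(n−j). -/
open Finset

/-! We prove the classical identity `σ₇(n) = σ₃(n) + 120 ∑ σ₃(j) σ₃(n-j)` by a purely
elementary counting argument.  The convolution sum equals the sum of `a³b³` over the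
finite set `QS n` of quadruples `(a,b,x,y)` of positive integers with `a·x + b·y = n`.
The bijection `(a,b,x,y) ↦ (a+b, b, x, y-x)` between the regions `{y > x}` and `{a > b}`
of `QS n`, applied to the two weights `g₁ = a³b³` and `g₂ = a²b⁴`, reduces everything to
sums over the diagonal region `{x = y}`, which is parametrized by divisors of `n`;
a Faulhaber-type computation finishes the proof. -/

/-- The set of quadruples `(a,b,x,y)` of positive integers with `a*x + b*y = n`. -/
def QS (n : ℕ) : Finset (ℕ × ℕ × ℕ × ℕ) :=
  (Finset.Icc 1 n ×ˢ Finset.Icc 1 n ×ˢ Finset.Icc 1 n ×ˢ Finset.Icc 1 n).filter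
    fun q => q.1 * q.2.2.1 + q.2.1 * q.2.2.2 = n

lemma mem_QS {n : ℕ} {q : ℕ × ℕ × ℕ × ℕ} :
    q ∈ QS n ↔ (0 < q.1 ∧ 0 < q.2.1 ∧ 0 < q.2.2.1 ∧ 0 < q.2.2.2) ∧
      q.1 * q.2.2.1 + q.2.1 * q.2.2.2 = n := by
  obtain ⟨a, b, x, y⟩ := q
  simp only [QS, mem_filter, mem_product, mem_Icc]
  constructor
  · rintro ⟨⟨⟨ha1, _⟩, ⟨hb1, _⟩, ⟨hx1, _⟩, hy1, _⟩, h⟩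
    exact ⟨⟨ha1, hb1, hx1, hy1⟩, h⟩
  · rintro ⟨⟨ha, hb, hx, hy⟩, h⟩
    refine ⟨⟨⟨ha, ?_⟩, ⟨hb, ?_⟩, ⟨hx, ?_⟩, hy, ?_⟩, h⟩ <;> nlinarith

/-- The bijection `(a,b,x,y) ↦ (a+b, b, x, y-x)` from the region `y > x` to `a > b`. -/
lemma psi_sum (n : ℕ) (F : ℕ × ℕ × ℕ × ℕ → ℕ) :
    ∑ q ∈ (QS n).filter (fun q => q.2.1 < q.1), F q
      = ∑ q ∈ (QS n).filter (fun q => q.2.2.1 < q.2.2.2),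
          F (q.1 + q.2.1, q.2.1, q.2.2.1, q.2.2.2 - q.2.2.1) := by
  apply Finset.sum_nbij'
    (i := fun q => (q.1 - q.2.1, q.2.1, q.2.2.1, q.2.2.2 + q.2.2.1))
    (j := fun q => (q.1 + q.2.1, q.2.1, q.2.2.1, q.2.2.2 - q.2.2.1))
  · rintro ⟨a, b, x, y⟩ hq
    simp only [mem_filter, mem_QS] at hq ⊢
    obtain ⟨⟨⟨ha, hb, hx, hy⟩, hsum⟩, hba⟩ := hq
    have hbx : b * x ≤ a * x := Nat.mul_le_mul_right x (le_of_lt hba)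
    have h1 : (a - b) * x = a * x - b * x := Nat.sub_mul a b x
    have h2 : b * (y + x) = b * y + b * x := Nat.mul_add b y x
    refine ⟨⟨⟨?_, hb, hx, ?_⟩, ?_⟩, ?_⟩ <;> omega
  · rintro ⟨a, b, x, y⟩ hq
    simp only [mem_filter, mem_QS] at hq ⊢
    obtain ⟨⟨⟨ha, hb, hx, hy⟩, hsum⟩, hxy⟩ := hq
    have hbx : b * x ≤ b * y := Nat.mul_le_mul_left b (le_of_lt hxy)
    have h1 : b * (y - x) = b * y - b * x := Nat.mul_sub b y x
    have h2 : (a + b) * x = a * x + b * x := Nat.add_mul a b x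
    refine ⟨⟨⟨?_, hb, hx, ?_⟩, ?_⟩, ?_⟩ <;> omega
  · rintro ⟨a, b, x, y⟩ hq
    simp only [mem_filter, mem_QS] at hq
    simp only [Prod.mk.injEq, and_true, true_and]
    omega
  · rintro ⟨a, b, x, y⟩ hq
    simp only [mem_filter, mem_QS] at hq
    simp only [Prod.mk.injEq, and_true, true_and]
    omega
  · rintro ⟨a, b, x, y⟩ hq
    simp only [mem_filter, mem_QS] at hq
    congr 1
    simp only [Prod.mk.injEq, and_true, true_and]
    omega

/-- Swap symmetry `(a,b,x,y) ↦ (b,a,y,x)` of `QS n`. -/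
lemma tau_sum (n : ℕ) (F : ℕ × ℕ × ℕ × ℕ → ℕ) (P P' : ℕ × ℕ × ℕ × ℕ → Prop)
    [DecidablePred P] [DecidablePred P']
    (hP : ∀ q : ℕ × ℕ × ℕ × ℕ, P q ↔ P' (q.2.1, q.1, q.2.2.2, q.2.2.1)) :
    ∑ q ∈ (QS n).filter P, F q
      = ∑ q ∈ (QS n).filter P', F (q.2.1, q.1, q.2.2.2, q.2.2.1) := by
  apply Finset.sum_nbij'
    (i := fun q => (q.2.1, q.1, q.2.2.2, q.2.2.1))
    (j := fun q => (q.2.1, q.1, q.2.2.2, q.2.2.1))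
  · rintro ⟨a, b, x, y⟩ hq
    simp only [mem_filter, mem_QS] at hq ⊢
    obtain ⟨⟨⟨ha, hb, hx, hy⟩, hsum⟩, hp⟩ := hq
    exact ⟨⟨⟨hb, ha, hy, hx⟩, by omega⟩, (hP _).mp hp⟩
  · rintro ⟨a, b, x, y⟩ hq
    simp only [mem_filter, mem_QS] at hq ⊢
    obtain ⟨⟨⟨ha, hb, hx, hy⟩, hsum⟩, hp⟩ := hq
    exact ⟨⟨⟨hb, ha, hy, hx⟩, by omega⟩, (hP _).mpr hp⟩
  · rintro ⟨a, b, x, y⟩ _; rfl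
  · rintro ⟨a, b, x, y⟩ _; rfl
  · rintro ⟨a, b, x, y⟩ _; rfl

/-- Parametrization of the region `x = y` by a divisor `s = a + b` of `n`. -/
lemma bdry_sum (n : ℕ) (hn : 0 < n) (g : ℕ → ℕ → ℕ) :
    ∑ q ∈ (QS n).filter (fun q => q.2.2.1 = q.2.2.2), g q.1 q.2.1
      = ∑ s ∈ n.divisors, ∑ a ∈ Finset.Ico 1 s, g a (s - a) := by
  rw [Finset.sum_sigma']
  apply Finset.sum_nbij'
    (i := fun q => (⟨q.1 + q.2.1, q.1⟩ : Σ _ : ℕ, ℕ))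
    (j := fun p => (p.2, p.1 - p.2, n / p.1, n / p.1))
  · rintro ⟨a, b, x, y⟩ hq
    simp only [mem_filter, mem_QS] at hq
    obtain ⟨⟨⟨ha, hb, hx, hy⟩, hsum⟩, hxy⟩ := hq
    subst hxy
    have hs : (a + b) * x = n := by rw [Nat.add_mul]; omega
    simp only [mem_sigma, Nat.mem_divisors, mem_Ico]
    exact ⟨⟨⟨x, hs.symm⟩, by omega⟩, by omega, by omega⟩
  · rintro ⟨s, a⟩ hp
    simp only [mem_sigma, Nat.mem_divisors, mem_Ico] at hp
    obtain ⟨⟨hdvd, hn0⟩, ha1, has⟩ := hp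
    have hs0 : 0 < s := by omega
    have hxpos : 0 < n / s := Nat.div_pos (Nat.le_of_dvd hn hdvd) hs0
    simp only [mem_filter, mem_QS]
    refine ⟨⟨⟨ha1, by omega, hxpos, hxpos⟩, ?_⟩, by simp⟩
    have h1 : a * (n / s) + (s - a) * (n / s) = (a + (s - a)) * (n / s) :=
      (Nat.add_mul a (s - a) (n / s)).symm
    rw [h1, show a + (s - a) = s by omega, Nat.mul_div_cancel' hdvd]
  · rintro ⟨a, b, x, y⟩ hq
    simp only [mem_filter, mem_QS] at hq
    obtain ⟨⟨⟨ha, hb, hx, hy⟩, hsum⟩, hxy⟩ := hq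
    subst hxy
    have hs : (a + b) * x = n := by rw [Nat.add_mul]; omega
    have hdiv : n / (a + b) = x := by rw [← hs]; exact Nat.mul_div_cancel_left x (by omega)
    simp only [Prod.mk.injEq, and_true, true_and]
    exact ⟨by omega, hdiv, hdiv⟩
  · rintro ⟨s, a⟩ hp
    simp only [mem_sigma, Nat.mem_divisors, mem_Ico] at hp
    simp only [Sigma.mk.inj_iff, heq_eq_eq, and_true]
    omega
  · rintro ⟨a, b, x, y⟩ hq
    simp only [mem_filter, mem_QS] at hq
    have : a + b - a = b := by omega
    simp only [this]

/-- The convolution sum as a sum over quadruples. -/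
lemma conv_sum (n : ℕ) :
    ∑ j ∈ Finset.Ico 1 n, (∑ d ∈ j.divisors, d ^ 3) * (∑ d ∈ (n - j).divisors, d ^ 3)
      = ∑ q ∈ QS n, q.1 ^ 3 * q.2.1 ^ 3 := by
  have step : ∀ j ∈ Finset.Ico 1 n,
      (∑ d ∈ j.divisors, d ^ 3) * (∑ d ∈ (n - j).divisors, d ^ 3)
        = ∑ p ∈ j.divisors ×ˢ (n - j).divisors, p.1 ^ 3 * p.2 ^ 3 := by
    intro j _
    rw [Finset.sum_mul_sum, Finset.sum_product]
  rw [Finset.sum_congr rfl step, Finset.sum_sigma']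
  apply Finset.sum_nbij'
    (i := fun p => (p.2.1, p.2.2, p.1 / p.2.1, (n - p.1) / p.2.2))
    (j := fun q => (⟨q.1 * q.2.2.1, (q.1, q.2.1)⟩ : Σ _ : ℕ, ℕ × ℕ))
  · rintro ⟨j, d, e⟩ hp
    simp only [mem_sigma, mem_Ico, mem_product, Nat.mem_divisors] at hp
    obtain ⟨⟨hj1, hjn⟩, ⟨hd, hj0⟩, he, hnj0⟩ := hp
    have hd0 : 0 < d := Nat.pos_of_dvd_of_pos hd (by omega)
    have he0 : 0 < e := Nat.pos_of_dvd_of_pos he (by omega)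
    simp only [mem_QS]
    refine ⟨⟨hd0, he0, Nat.div_pos (Nat.le_of_dvd (by omega) hd) hd0,
      Nat.div_pos (Nat.le_of_dvd (by omega) he) he0⟩, ?_⟩
    rw [Nat.mul_div_cancel' hd, Nat.mul_div_cancel' he]
    omega
  · rintro ⟨a, b, x, y⟩ hq
    simp only [mem_QS] at hq
    obtain ⟨⟨ha, hb, hx, hy⟩, hsum⟩ := hq
    have hax : 0 < a * x := Nat.mul_pos ha hx
    have hby : 0 < b * y := Nat.mul_pos hb hy
    simp only [mem_sigma, mem_Ico, mem_product, Nat.mem_divisors]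
    refine ⟨⟨by omega, by omega⟩, ⟨Dvd.intro x rfl, by omega⟩, ?_, by omega⟩
    have h : n - a * x = b * y := by omega
    rw [h]
    exact Dvd.intro y rfl
  · rintro ⟨j, d, e⟩ hp
    simp only [mem_sigma, mem_Ico, mem_product, Nat.mem_divisors] at hp
    obtain ⟨⟨hj1, hjn⟩, ⟨hd, hj0⟩, he, hnj0⟩ := hp
    simp only [Sigma.mk.inj_iff, Prod.mk.injEq, heq_eq_eq, and_true, true_and]
    rw [Nat.mul_div_cancel' hd]
  · rintro ⟨a, b, x, y⟩ hq
    simp only [mem_QS] at hq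
    obtain ⟨⟨ha, hb, hx, hy⟩, hsum⟩ := hq
    simp only [Prod.mk.injEq, and_true, true_and]
    constructor
    · exact Nat.mul_div_cancel_left x ha
    · have h : n - a * x = b * y := by omega
      rw [h]
      exact Nat.mul_div_cancel_left y hb
  · rintro ⟨j, d, e⟩ _
    rfl

/-- Splitting `QS n` into the regions `x < y`, `y < x`, `x = y`. -/
lemma split_xy (n : ℕ) (F : ℕ × ℕ × ℕ × ℕ → ℕ) :
    ∑ q ∈ QS n, F q
      = ∑ q ∈ (QS n).filter (fun q => q.2.2.1 < q.2.2.2), F q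
        + ∑ q ∈ (QS n).filter (fun q => q.2.2.2 < q.2.2.1), F q
        + ∑ q ∈ (QS n).filter (fun q => q.2.2.1 = q.2.2.2), F q := by
  rw [← Finset.sum_filter_add_sum_filter_not (QS n) (fun q => q.2.2.1 < q.2.2.2) F,
    ← Finset.sum_filter_add_sum_filter_not ((QS n).filter fun q => ¬q.2.2.1 < q.2.2.2)
      (fun q => q.2.2.2 < q.2.2.1) F, Finset.filter_filter, Finset.filter_filter, add_assoc]
  congr 2
  · refine Finset.sum_congr (Finset.filter_congr fun q _ => ?_) fun _ _ => rfl
    constructor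
    · rintro ⟨_, h⟩; exact h
    · intro h; exact ⟨by omega, h⟩
  · refine Finset.sum_congr (Finset.filter_congr fun q _ => ?_) fun _ _ => rfl
    constructor
    · rintro ⟨h1, h2⟩; omega
    · intro h; omega

/-- Splitting `QS n` into the regions `b < a`, `a < b`, `a = b`. -/
lemma split_ab (n : ℕ) (F : ℕ × ℕ × ℕ × ℕ → ℕ) :
    ∑ q ∈ QS n, F q
      = ∑ q ∈ (QS n).filter (fun q => q.2.1 < q.1), F q
        + ∑ q ∈ (QS n).filter (fun q => q.1 < q.2.1), F q
        + ∑ q ∈ (QS n).filter (fun q => q.1 = q.2.1), F q := by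
  rw [← Finset.sum_filter_add_sum_filter_not (QS n) (fun q => q.2.1 < q.1) F,
    ← Finset.sum_filter_add_sum_filter_not ((QS n).filter fun q => ¬q.2.1 < q.1)
      (fun q => q.1 < q.2.1) F, Finset.filter_filter, Finset.filter_filter, add_assoc]
  congr 2
  · refine Finset.sum_congr (Finset.filter_congr fun q _ => ?_) fun _ _ => rfl
    constructor
    · rintro ⟨_, h⟩; exact h
    · intro h; exact ⟨by omega, h⟩
  · refine Finset.sum_congr (Finset.filter_congr fun q _ => ?_) fun _ _ => rfl
    constructor
    · rintro ⟨h1, h2⟩; omega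
    · intro h; omega

/-- Liouville-type engine identity for an arbitrary weight `g` depending only on `a, b`. -/
lemma engine (n : ℕ) (g : ℕ → ℕ → ℕ) :
    (∑ q ∈ (QS n).filter (fun q => q.2.2.1 < q.2.2.2), (g q.1 q.2.1 + g q.2.1 q.1))
      + ∑ q ∈ (QS n).filter (fun q => q.2.2.1 = q.2.2.2), g q.1 q.2.1
    = (∑ q ∈ (QS n).filter (fun q => q.2.2.1 < q.2.2.2),
        (g (q.1 + q.2.1) q.2.1 + g q.2.1 (q.1 + q.2.1)))
      + ∑ q ∈ (QS n).filter (fun q => q.1 = q.2.1), g q.1 q.2.1 := by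
  have hA := split_xy n (fun q => g q.1 q.2.1)
  have hB := split_ab n (fun q => g q.1 q.2.1)
  have hC := tau_sum n (fun q => g q.1 q.2.1) (fun q => q.2.2.2 < q.2.2.1)
    (fun q => q.2.2.1 < q.2.2.2) (fun q => Iff.rfl)
  have hD := tau_sum n (fun q => g q.1 q.2.1) (fun q => q.1 < q.2.1)
    (fun q => q.2.1 < q.1) (fun q => Iff.rfl)
  have hE1 := psi_sum n (fun q => g q.1 q.2.1)
  have hE2 := psi_sum n (fun q => g q.2.1 q.1)
  simp only [Finset.sum_add_distrib]
  dsimp only at hA hB hC hD hE1 hE2 ⊢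
  omega


lemma pow2_sum (s : ℕ) : 6 * ∑ a ∈ range s, (a : ℤ) ^ 2 = s * (s - 1) * (2 * s - 1) := by
  induction s with
  | zero => simp
  | succ k ih => rw [Finset.sum_range_succ, mul_add, ih]; push_cast; ring

lemma pow3_sum (s : ℕ) : 4 * ∑ a ∈ range s, (a : ℤ) ^ 3 = s ^ 2 * (s - 1) ^ 2 := by
  induction s with
  | zero => simp
  | succ k ih => rw [Finset.sum_range_succ, mul_add, ih]; push_cast; ring

lemma pow4_sum (s : ℕ) :
    30 * ∑ a ∈ range s, (a : ℤ) ^ 4 = s * (s - 1) * (2 * s - 1) * (3 * s ^ 2 - 3 * s - 1) := by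
  induction s with
  | zero => simp
  | succ k ih => rw [Finset.sum_range_succ, mul_add, ih]; push_cast; ring

lemma pow5_sum (s : ℕ) :
    12 * ∑ a ∈ range s, (a : ℤ) ^ 5 = s ^ 2 * (s - 1) ^ 2 * (2 * s ^ 2 - 2 * s - 1) := by
  induction s with
  | zero => simp
  | succ k ih => rw [Finset.sum_range_succ, mul_add, ih]; push_cast; ring

lemma faulhaber_int (s : ℕ) :
    60 * ∑ a ∈ range s, ((a : ℤ) ^ 3 * ((s : ℤ) - a) ^ 3 + (a : ℤ) ^ 2 * ((s : ℤ) - a) ^ 4)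
      + (s : ℤ) ^ 3 = (s : ℤ) ^ 7 := by
  have expand : ∑ a ∈ range s, ((a : ℤ) ^ 3 * ((s : ℤ) - a) ^ 3 + (a : ℤ) ^ 2 * ((s : ℤ) - a) ^ 4)
      = (s : ℤ) ^ 4 * (∑ a ∈ range s, (a : ℤ) ^ 2) - 3 * (s : ℤ) ^ 3 * (∑ a ∈ range s, (a : ℤ) ^ 3)
        + 3 * (s : ℤ) ^ 2 * (∑ a ∈ range s, (a : ℤ) ^ 4) - (s : ℤ) * (∑ a ∈ range s, (a : ℤ) ^ 5) := by
    rw [Finset.mul_sum, Finset.mul_sum, Finset.mul_sum, Finset.mul_sum,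
      ← Finset.sum_sub_distrib, ← Finset.sum_add_distrib, ← Finset.sum_sub_distrib]
    exact Finset.sum_congr rfl fun a _ => by ring
  rw [expand]
  linear_combination 10 * (s : ℤ) ^ 4 * pow2_sum s - 45 * (s : ℤ) ^ 3 * pow3_sum s
    + 6 * (s : ℤ) ^ 2 * pow4_sum s - 5 * (s : ℤ) * pow5_sum s

lemma faulhaber_nat (s : ℕ) :
    60 * (∑ a ∈ Finset.Ico 1 s, (a ^ 3 * (s - a) ^ 3 + a ^ 2 * (s - a) ^ 4)) + s ^ 3 = s ^ 7 := by
  have hcast : ((∑ a ∈ Finset.Ico 1 s, (a ^ 3 * (s - a) ^ 3 + a ^ 2 * (s - a) ^ 4) : ℕ) : ℤ)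
      = ∑ a ∈ range s, ((a : ℤ) ^ 3 * ((s : ℤ) - a) ^ 3 + (a : ℤ) ^ 2 * ((s : ℤ) - a) ^ 4) := by
    rcases Nat.eq_zero_or_pos s with hs | hs
    · subst hs; simp
    rw [Finset.range_eq_Ico, Finset.sum_eq_sum_Ico_succ_bot hs]
    simp only [Nat.cast_zero, zero_pow, zero_mul, zero_add, ne_eq, OfNat.ofNat_ne_zero,
      not_false_eq_true]
    rw [Nat.cast_sum]
    refine Finset.sum_congr rfl fun a ha => ?_
    have haa : a ≤ s := le_of_lt (Finset.mem_Ico.mp ha).2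
    push_cast [Nat.cast_sub haa]
    ring
  have key := faulhaber_int s
  rw [← hcast] at key
  exact_mod_cast key

/-- For every positive integer `n`,
`σ_7(n) = σ_3(n) + 120 ∑_{j=1}^{n-1} σ_3(j) σ_3(n-j)`. -/
theorem sigma7_identity (n : ℕ) (hn : 0 < n) :
    ∑ d ∈ n.divisors, d ^ 7 =
      (∑ d ∈ n.divisors, d ^ 3) +
        120 * ∑ j ∈ Finset.Ico 1 n,
          (∑ d ∈ j.divisors, d ^ 3) * (∑ d ∈ (n - j).divisors, d ^ 3) := by
  have hconv := conv_sum n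
  have e1 := engine n (fun a b => a ^ 3 * b ^ 3)
  have e2 := engine n (fun a b => a ^ 2 * b ^ 4)

  -- the two diagonal `a = b` sums agree
  have hBB : ∑ q ∈ (QS n).filter (fun q => q.1 = q.2.1), q.1 ^ 3 * q.2.1 ^ 3
      = ∑ q ∈ (QS n).filter (fun q => q.1 = q.2.1), q.1 ^ 2 * q.2.1 ^ 4 := by
    refine Finset.sum_congr rfl fun q hq => ?_
    have h : q.1 = q.2.1 := (Finset.mem_filter.mp hq).2
    rw [← h]; ring
  -- pointwise algebraic identity combining the two engine identities
  have hpoint : ∑ q ∈ (QS n).filter (fun q => q.2.2.1 < q.2.2.2),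
        ((q.1 ^ 3 * q.2.1 ^ 3 + q.2.1 ^ 3 * q.1 ^ 3)
          + ((q.1 + q.2.1) ^ 2 * q.2.1 ^ 4 + q.2.1 ^ 2 * (q.1 + q.2.1) ^ 4))
      = ∑ q ∈ (QS n).filter (fun q => q.2.2.1 < q.2.2.2),
        (4 * (q.1 ^ 3 * q.2.1 ^ 3) + ((q.1 ^ 2 * q.2.1 ^ 4 + q.2.1 ^ 2 * q.1 ^ 4)
          + ((q.1 + q.2.1) ^ 3 * q.2.1 ^ 3 + q.2.1 ^ 3 * (q.1 + q.2.1) ^ 3))) :=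
    Finset.sum_congr rfl fun q _ => by ring
  simp only [Finset.sum_add_distrib, ← Finset.mul_sum] at hpoint e1 e2
  -- commuting the product
  have hcomm : ∑ q ∈ (QS n).filter (fun q => q.2.2.1 < q.2.2.2), q.2.1 ^ 3 * q.1 ^ 3
      = ∑ q ∈ (QS n).filter (fun q => q.2.2.1 < q.2.2.2), q.1 ^ 3 * q.2.1 ^ 3 :=
    Finset.sum_congr rfl fun q _ => mul_comm _ _
  have hsplit := split_xy n (fun q => q.1 ^ 3 * q.2.1 ^ 3)
  have hyx := tau_sum n (fun q => q.1 ^ 3 * q.2.1 ^ 3) (fun q => q.2.2.2 < q.2.2.1)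
    (fun q => q.2.2.1 < q.2.2.2) (fun q => Iff.rfl)
  dsimp only at hyx
  -- boundary sum over the diagonal x = y
  have hbd := bdry_sum n hn (fun a b => a ^ 3 * b ^ 3 + a ^ 2 * b ^ 4)
  rw [Finset.sum_add_distrib] at hbd
  -- divisor-sum evaluation via Faulhaber's formulas
  have h7 : ∑ s ∈ n.divisors, s ^ 7
      = 60 * (∑ s ∈ n.divisors, ∑ a ∈ Finset.Ico 1 s,
          (a ^ 3 * (s - a) ^ 3 + a ^ 2 * (s - a) ^ 4)) + ∑ s ∈ n.divisors, s ^ 3 := by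
    rw [Finset.mul_sum, ← Finset.sum_add_distrib]
    exact Finset.sum_congr rfl fun s _ => (faulhaber_nat s).symm
  omega
end

section
/- In the ring of formal power series ℚ[[q]], the identity 691 · E₁₂ = 441 · E₄³ + 250 · E₆² holds, where E₄ = 1 + 240 Σ_{n≥1} σ_3(n) qⁿ, E₆ = 1 − 504 Σ_{n≥1} σ_5(n) qⁿ, and E₁₂ = 1 + (65520/691) Σ_{n≥1} σ_11(n) qⁿ. -/
open Finset PowerSeries

/-!
We prove the identity `691 E₁₂ = 441 E₄³ + 250 E₆²` in `ℚ[[q]]` by elementary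
(Liouville/Skoruppa-style) combinatorial manipulation of divisor-sum convolutions,
based on bijections on the set of quadruples `(a,b,x,y)` with `a x + b y = n`.
-/

def sol (n : ℕ) : Finset (ℕ × ℕ × ℕ × ℕ) :=
  ((range (n+1)) ×ˢ (range (n+1)) ×ˢ (range (n+1)) ×ˢ (range (n+1))).filter
    (fun p => 1 ≤ p.1 ∧ 1 ≤ p.2.1 ∧ 1 ≤ p.2.2.1 ∧ 1 ≤ p.2.2.2 ∧
      p.1 * p.2.2.1 + p.2.1 * p.2.2.2 = n)

lemma mem_sol {n : ℕ} {p : ℕ × ℕ × ℕ × ℕ} :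
    p ∈ sol n ↔ 1 ≤ p.1 ∧ 1 ≤ p.2.1 ∧ 1 ≤ p.2.2.1 ∧ 1 ≤ p.2.2.2 ∧
      p.1 * p.2.2.1 + p.2.1 * p.2.2.2 = n := by
  obtain ⟨a, b, x, y⟩ := p
  simp only [sol, mem_filter, mem_product, mem_range]
  constructor
  · rintro ⟨-, h⟩; exact h
  · rintro ⟨ha, hb, hx, hy, h⟩
    refine ⟨⟨?_, ?_, ?_, ?_⟩, ha, hb, hx, hy, h⟩ <;>
    · simp only [Nat.lt_succ_iff]; nlinarith

/-- Swap symmetry of `sol`. -/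
lemma sum_swap_sol (n : ℕ) (f : ℕ → ℕ → ℕ → ℕ → ℚ) :
    ∑ p ∈ sol n, f p.1 p.2.1 p.2.2.1 p.2.2.2 =
      ∑ p ∈ sol n, f p.2.1 p.1 p.2.2.2 p.2.2.1 := by
  refine Finset.sum_nbij' (fun p => (p.2.1, p.1, p.2.2.2, p.2.2.1))
    (fun p => (p.2.1, p.1, p.2.2.2, p.2.2.1)) ?_ ?_ ?_ ?_ ?_ <;>
    rintro ⟨a, b, x, y⟩ h <;> simp_all [mem_sol] <;> omega

/-- The key Liouville-type bijection: (a,b,x,y) ↦ (a-b, b, x, x+y) maps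
solutions with `b < a` to solutions with `x < y`. -/
lemma sum_phi (n : ℕ) (g : ℕ → ℕ → ℚ) :
    ∑ p ∈ sol n, (if p.2.1 < p.1 then g p.1 p.2.1 else 0) =
      ∑ p ∈ sol n, (if p.2.2.1 < p.2.2.2 then g (p.1 + p.2.1) p.2.1 else 0) := by
  rw [← Finset.sum_filter, ← Finset.sum_filter]
  refine Finset.sum_nbij' (fun p => (p.1 - p.2.1, p.2.1, p.2.2.1, p.2.2.1 + p.2.2.2))
    (fun p => (p.1 + p.2.1, p.2.1, p.2.2.1, p.2.2.2 - p.2.2.1)) ?_ ?_ ?_ ?_ ?_ <;>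
    rintro ⟨a, b, x, y⟩ h <;>
    simp only [mem_filter, mem_sol] at h ⊢
  · obtain ⟨⟨ha, hb, hx, hy, he⟩, hab⟩ := h
    refine ⟨⟨by omega, by omega, by omega, by omega, ?_⟩, by omega⟩
    have : (a - b) * x = a * x - b * x := by rw [Nat.sub_mul]
    have hbx : b * x ≤ a * x := Nat.mul_le_mul_right x (by omega)
    rw [this, Nat.mul_add]
    omega
  · obtain ⟨⟨ha, hb, hx, hy, he⟩, hxy⟩ := h
    refine ⟨⟨by omega, by omega, by omega, by omega, ?_⟩, by omega⟩
    have h1 : b * (y - x) = b * y - b * x := by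
      rw [mul_comm, Nat.sub_mul, mul_comm x b, mul_comm y b]
    have hbx : b * x ≤ b * y := Nat.mul_le_mul_left b (by omega)
    rw [Nat.add_mul, h1]
    omega
  · obtain ⟨⟨ha, hb, hx, hy, he⟩, hab⟩ := h
    simp only [Prod.mk.injEq]
    refine ⟨by omega, trivial, trivial, by omega⟩
  · obtain ⟨⟨ha, hb, hx, hy, he⟩, hxy⟩ := h
    simp only [Prod.mk.injEq]
    refine ⟨by omega, trivial, trivial, by omega⟩
  · obtain ⟨⟨ha, hb, hx, hy, he⟩, hab⟩ := h
    have : a - b + b = a := by omega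
    simp only [this]

/-- Partition a sum over `sol n` by trichotomy on a comparison key. -/
lemma sum_trichotomy (n : ℕ) (F : ℕ × ℕ × ℕ × ℕ → ℚ) (k : ℕ × ℕ × ℕ × ℕ → ℕ × ℕ) :
    ∑ p ∈ sol n, F p =
      (∑ p ∈ sol n, if (k p).2 < (k p).1 then F p else 0) +
      (∑ p ∈ sol n, if (k p).1 < (k p).2 then F p else 0) +
      (∑ p ∈ sol n, if (k p).1 = (k p).2 then F p else 0) := by
  rw [← Finset.sum_add_distrib, ← Finset.sum_add_distrib]
  refine Finset.sum_congr rfl fun p _ => ?_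
  rcases lt_trichotomy (k p).1 (k p).2 with h | h | h
  · rw [if_neg (by omega), if_pos h, if_neg (by omega)]; ring
  · rw [if_neg (by omega), if_neg (by omega), if_pos h]; ring
  · rw [if_pos h, if_neg (by omega), if_neg (by omega)]; ring

lemma R2 (n r s : ℕ) :
    ∑ p ∈ sol n, (p.1 : ℚ) ^ r * (p.2.1 : ℚ) ^ s =
      (∑ p ∈ sol n, if p.2.2.1 < p.2.2.2 then
          (p.1 : ℚ) ^ r * (p.2.1 : ℚ) ^ s + (p.1 : ℚ) ^ s * (p.2.1 : ℚ) ^ r else 0) +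
      (∑ p ∈ sol n, if p.2.2.1 = p.2.2.2 then (p.1 : ℚ) ^ r * (p.2.1 : ℚ) ^ s else 0) := by
  have h := sum_trichotomy n (fun p => (p.1 : ℚ) ^ r * (p.2.1 : ℚ) ^ s)
    (fun p => (p.2.2.1, p.2.2.2))
  simp only at h
  rw [h]
  have hsw := sum_swap_sol n (fun a b x y => if y < x then (a : ℚ) ^ r * (b : ℚ) ^ s else 0)
  rw [hsw, ← Finset.sum_add_distrib]
  congr 1
  refine Finset.sum_congr rfl fun p _ => ?_
  split_ifs <;> ring

lemma R1 (n r s w : ℕ) (hw : r + s = w) :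
    ∑ p ∈ sol n, (p.1 : ℚ) ^ r * (p.2.1 : ℚ) ^ s =
      (∑ p ∈ sol n, if p.2.2.1 < p.2.2.2 then
          ((p.1 : ℚ) + (p.2.1 : ℚ)) ^ r * (p.2.1 : ℚ) ^ s +
          (p.2.1 : ℚ) ^ r * ((p.1 : ℚ) + (p.2.1 : ℚ)) ^ s else 0) +
      (∑ p ∈ sol n, if p.1 = p.2.1 then (p.1 : ℚ) ^ w else 0) := by
  have h := sum_trichotomy n (fun p => (p.1 : ℚ) ^ r * (p.2.1 : ℚ) ^ s)
    (fun p => (p.1, p.2.1))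
  simp only at h
  rw [h]
  -- first piece: b < a
  have h1 := sum_phi n (fun u v => (u : ℚ) ^ r * (v : ℚ) ^ s)
  -- second piece: a < b : swap then phi
  have hsw := sum_swap_sol n (fun a b x y => if a < b then (a : ℚ) ^ r * (b : ℚ) ^ s else 0)
  have h2 := sum_phi n (fun u v => (v : ℚ) ^ r * (u : ℚ) ^ s)
  have hdiag : (∑ p ∈ sol n, if p.1 = p.2.1 then (p.1 : ℚ) ^ r * (p.2.1 : ℚ) ^ s else 0)
      = ∑ p ∈ sol n, if p.1 = p.2.1 then (p.1 : ℚ) ^ w else 0 := by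
    refine Finset.sum_congr rfl fun p _ => ?_
    split_ifs with hp
    · rw [← hp, ← pow_add, hw]
    · rfl
  push_cast at h1 h2
  rw [h1, hsw, h2, hdiag, ← Finset.sum_add_distrib]
  congr 1
  refine Finset.sum_congr rfl fun p _ => ?_
  split_ifs <;> ring

lemma ps2 (N : ℕ) : ∑ a ∈ Finset.range N, (a:ℚ)^2 = (2*(N:ℚ)^3 - 3*(N:ℚ)^2 + (N:ℚ))/6 := by
  induction N with
  | zero => simp
  | succ n ih => rw [Finset.sum_range_succ, ih]; push_cast; ring

lemma ps3 (N : ℕ) : ∑ a ∈ Finset.range N, (a:ℚ)^3 = ((N:ℚ)^4 - 2*(N:ℚ)^3 + (N:ℚ)^2)/4 := by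
  induction N with
  | zero => simp
  | succ n ih => rw [Finset.sum_range_succ, ih]; push_cast; ring

lemma ps4 (N : ℕ) : ∑ a ∈ Finset.range N, (a:ℚ)^4 = (6*(N:ℚ)^5 - 15*(N:ℚ)^4 + 10*(N:ℚ)^3 - (N:ℚ))/30 := by
  induction N with
  | zero => simp
  | succ n ih => rw [Finset.sum_range_succ, ih]; push_cast; ring

lemma ps5 (N : ℕ) : ∑ a ∈ Finset.range N, (a:ℚ)^5 = (2*(N:ℚ)^6 - 6*(N:ℚ)^5 + 5*(N:ℚ)^4 - (N:ℚ)^2)/12 := by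
  induction N with
  | zero => simp
  | succ n ih => rw [Finset.sum_range_succ, ih]; push_cast; ring

lemma ps6 (N : ℕ) : ∑ a ∈ Finset.range N, (a:ℚ)^6 = (6*(N:ℚ)^7 - 21*(N:ℚ)^6 + 21*(N:ℚ)^5 - 7*(N:ℚ)^3 + (N:ℚ))/42 := by
  induction N with
  | zero => simp
  | succ n ih => rw [Finset.sum_range_succ, ih]; push_cast; ring

lemma ico_range (f : ℕ → ℚ) (hf : f 0 = 0) (e : ℕ) :
    ∑ a ∈ Finset.Ico 1 e, f a = ∑ a ∈ Finset.range e, f a := by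
  rcases Nat.eq_zero_or_pos e with rfl | he
  · simp
  · rw [Finset.range_eq_Ico, Finset.sum_eq_sum_Ico_succ_bot he, hf, zero_add]

lemma ps7 (N : ℕ) : ∑ a ∈ Finset.range N, (a:ℚ)^7 = (3*(N:ℚ)^8 - 12*(N:ℚ)^7 + 14*(N:ℚ)^6 - 7*(N:ℚ)^4 + 2*(N:ℚ)^2)/24 := by
  induction N with
  | zero => simp
  | succ n ih => rw [Finset.sum_range_succ, ih]; push_cast; ring

lemma ps8 (N : ℕ) : ∑ a ∈ Finset.range N, (a:ℚ)^8 = (10*(N:ℚ)^9 - 45*(N:ℚ)^8 + 60*(N:ℚ)^7 - 42*(N:ℚ)^5 + 20*(N:ℚ)^3 - 3*(N:ℚ))/90 := by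
  induction N with
  | zero => simp
  | succ n ih => rw [Finset.sum_range_succ, ih]; push_cast; ring

lemma ps9 (N : ℕ) : ∑ a ∈ Finset.range N, (a:ℚ)^9 = (2*(N:ℚ)^10 - 10*(N:ℚ)^9 + 15*(N:ℚ)^8 - 14*(N:ℚ)^6 + 10*(N:ℚ)^4 - 3*(N:ℚ)^2)/20 := by
  induction N with
  | zero => simp
  | succ n ih => rw [Finset.sum_range_succ, ih]; push_cast; ring

lemma ps10 (N : ℕ) : ∑ a ∈ Finset.range N, (a:ℚ)^10 = (6*(N:ℚ)^11 - 33*(N:ℚ)^10 + 55*(N:ℚ)^9 - 66*(N:ℚ)^7 + 66*(N:ℚ)^5 - 33*(N:ℚ)^3 + 5*(N:ℚ))/66 := by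
  induction N with
  | zero => simp
  | succ n ih => rw [Finset.sum_range_succ, ih]; push_cast; ring

lemma diagsum (n : ℕ) (hn : n ≠ 0) (g : ℕ → ℕ → ℚ) :
    ∑ p ∈ sol n, (if p.2.2.1 = p.2.2.2 then g p.1 p.2.1 else 0) =
      ∑ e ∈ n.divisors, ∑ a ∈ Finset.Ico 1 e, g a (e - a) := by
  rw [← Finset.sum_filter, Finset.sum_sigma']
  refine Finset.sum_nbij' (fun p => ⟨p.1 + p.2.1, p.1⟩)
    (fun q => (q.2, q.1 - q.2, n / q.1, n / q.1)) ?_ ?_ ?_ ?_ ?_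
  · rintro ⟨a, b, x, y⟩ h
    simp only [mem_filter, mem_sol] at h
    obtain ⟨⟨ha, hb, hx, hy, he⟩, hxy⟩ := h
    subst hxy
    simp only [Finset.mem_sigma, Nat.mem_divisors, Finset.mem_Ico]
    refine ⟨⟨⟨x, by rw [← he]; ring⟩, hn⟩, ha, by omega⟩
  · rintro ⟨e, a⟩ h
    simp only [Finset.mem_sigma, Nat.mem_divisors, Finset.mem_Ico] at h
    obtain ⟨⟨hdvd, -⟩, ha1, hae⟩ := h
    simp only [mem_filter, mem_sol]
    have he1 : 1 ≤ e := by omega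
    have hne : 1 ≤ n / e := Nat.one_le_div_iff (by omega) |>.mpr (Nat.le_of_dvd (by omega) hdvd)
    refine ⟨⟨ha1, by omega, hne, hne, ?_⟩, trivial⟩
    rw [← Nat.add_mul]
    have : a + (e - a) = e := by omega
    rw [this, Nat.mul_div_cancel' hdvd]
  · rintro ⟨a, b, x, y⟩ h
    simp only [mem_filter, mem_sol] at h
    obtain ⟨⟨ha, hb, hx, hy, he⟩, hxy⟩ := h
    subst hxy
    simp only [Prod.mk.injEq]
    have hx0 : 0 < a + b := by omega
    have hdx : n / (a + b) = x := by
      rw [← he, show a * x + b * x = (a + b) * x from by ring]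
      exact Nat.mul_div_cancel_left x hx0
    exact ⟨trivial, by omega, hdx, hdx⟩
  · rintro ⟨e, a⟩ h
    simp only [Finset.mem_sigma, Nat.mem_divisors, Finset.mem_Ico] at h
    obtain ⟨⟨hdvd, -⟩, ha1, hae⟩ := h
    have h1 : a + (e - a) = e := by omega
    simp only [h1]
  · rintro ⟨a, b, x, y⟩ h
    simp only [mem_filter, mem_sol] at h
    obtain ⟨⟨ha, hb, hx, hy, he⟩, hxy⟩ := h
    have : a + b - a = b := by omega
    simp only [this]

lemma inner24 (e : ℕ) : ∑ a ∈ Finset.Ico 1 e, (a:ℚ)^2 * (((e - a : ℕ)):ℚ)^4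
    = (2*(e:ℚ)^7 - 7*(e:ℚ)^3 + 5*(e:ℚ))/210 := by
  have h1 : ∑ a ∈ Finset.Ico 1 e, (a:ℚ)^2 * (((e - a : ℕ)):ℚ)^4
      = ∑ a ∈ Finset.Ico 1 e, (a:ℚ)^2 * ((e:ℚ) - (a:ℚ))^4 :=
    Finset.sum_congr rfl fun a ha => by
      rw [Nat.cast_sub (le_of_lt (Finset.mem_Ico.mp ha).2)]
  rw [h1, ico_range _ (by norm_num) e]
  calc ∑ a ∈ Finset.range e, (a:ℚ)^2 * ((e:ℚ) - (a:ℚ))^4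
      = ∑ a ∈ Finset.range e, ((e:ℚ)^4*(a:ℚ)^2 + (-(4*(e:ℚ)^3))*(a:ℚ)^3 + (6*(e:ℚ)^2)*(a:ℚ)^4 + (-(4*(e:ℚ)))*(a:ℚ)^5 + (1:ℚ)*(a:ℚ)^6) :=
        Finset.sum_congr rfl fun a _ => by ring
    _ = (2*(e:ℚ)^7 - 7*(e:ℚ)^3 + 5*(e:ℚ))/210 := by
        simp only [Finset.sum_add_distrib, ← Finset.mul_sum]
        rw [ps2, ps3, ps4, ps5, ps6]
        ring

lemma ev24 (n : ℕ) (hn : n ≠ 0) :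
    (∑ p ∈ sol n, if p.2.2.1 = p.2.2.2 then (p.1:ℚ)^2 * (p.2.1:ℚ)^4 else 0)
      = ∑ e ∈ n.divisors, (2*(e:ℚ)^7 - 7*(e:ℚ)^3 + 5*(e:ℚ))/210 := by
  rw [diagsum n hn (fun a b => (a:ℚ)^2 * (b:ℚ)^4)]
  exact Finset.sum_congr rfl fun e _ => inner24 e

lemma inner33 (e : ℕ) : ∑ a ∈ Finset.Ico 1 e, (a:ℚ)^3 * (((e - a : ℕ)):ℚ)^3
    = (3*(e:ℚ)^7 + 7*(e:ℚ)^3 - 10*(e:ℚ))/420 := by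
  have h1 : ∑ a ∈ Finset.Ico 1 e, (a:ℚ)^3 * (((e - a : ℕ)):ℚ)^3
      = ∑ a ∈ Finset.Ico 1 e, (a:ℚ)^3 * ((e:ℚ) - (a:ℚ))^3 :=
    Finset.sum_congr rfl fun a ha => by
      rw [Nat.cast_sub (le_of_lt (Finset.mem_Ico.mp ha).2)]
  rw [h1, ico_range _ (by norm_num) e]
  calc ∑ a ∈ Finset.range e, (a:ℚ)^3 * ((e:ℚ) - (a:ℚ))^3
      = ∑ a ∈ Finset.range e, (((e:ℚ)^3)*(a:ℚ)^3 + (-(3*(e:ℚ)^2))*(a:ℚ)^4 + (3*(e:ℚ))*(a:ℚ)^5 + (-1:ℚ)*(a:ℚ)^6) :=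
        Finset.sum_congr rfl fun a _ => by ring
    _ = (3*(e:ℚ)^7 + 7*(e:ℚ)^3 - 10*(e:ℚ))/420 := by
        simp only [Finset.sum_add_distrib, ← Finset.mul_sum]
        rw [ps3, ps4, ps5, ps6]
        ring

lemma ev33 (n : ℕ) (hn : n ≠ 0) :
    (∑ p ∈ sol n, if p.2.2.1 = p.2.2.2 then (p.1:ℚ)^3 * (p.2.1:ℚ)^3 else 0)
      = ∑ e ∈ n.divisors, (3*(e:ℚ)^7 + 7*(e:ℚ)^3 - 10*(e:ℚ))/420 := by
  rw [diagsum n hn (fun a b => (a:ℚ)^3 * (b:ℚ)^3)]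
  exact Finset.sum_congr rfl fun e _ => inner33 e

lemma inner28 (e : ℕ) : ∑ a ∈ Finset.Ico 1 e, (a:ℚ)^2 * (((e - a : ℕ)):ℚ)^8
    = (2*(e:ℚ)^11 - 66*(e:ℚ)^7 + 220*(e:ℚ)^5 - 231*(e:ℚ)^3 + 75*(e:ℚ))/990 := by
  have h1 : ∑ a ∈ Finset.Ico 1 e, (a:ℚ)^2 * (((e - a : ℕ)):ℚ)^8
      = ∑ a ∈ Finset.Ico 1 e, (a:ℚ)^2 * ((e:ℚ) - (a:ℚ))^8 :=
    Finset.sum_congr rfl fun a ha => by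
      rw [Nat.cast_sub (le_of_lt (Finset.mem_Ico.mp ha).2)]
  rw [h1, ico_range _ (by norm_num) e]
  calc ∑ a ∈ Finset.range e, (a:ℚ)^2 * ((e:ℚ) - (a:ℚ))^8
      = ∑ a ∈ Finset.range e, (((e:ℚ)^8)*(a:ℚ)^2 + (-(8*(e:ℚ)^7))*(a:ℚ)^3 + (28*(e:ℚ)^6)*(a:ℚ)^4 + (-(56*(e:ℚ)^5))*(a:ℚ)^5 + (70*(e:ℚ)^4)*(a:ℚ)^6 + (-(56*(e:ℚ)^3))*(a:ℚ)^7 + (28*(e:ℚ)^2)*(a:ℚ)^8 + (-(8*(e:ℚ)))*(a:ℚ)^9 + (1:ℚ)*(a:ℚ)^10) :=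
        Finset.sum_congr rfl fun a _ => by ring
    _ = (2*(e:ℚ)^11 - 66*(e:ℚ)^7 + 220*(e:ℚ)^5 - 231*(e:ℚ)^3 + 75*(e:ℚ))/990 := by
        simp only [Finset.sum_add_distrib, ← Finset.mul_sum]
        rw [ps2, ps3, ps4, ps5, ps6, ps7, ps8, ps9, ps10]
        ring

lemma ev28 (n : ℕ) (hn : n ≠ 0) :
    (∑ p ∈ sol n, if p.2.2.1 = p.2.2.2 then (p.1:ℚ)^2 * (p.2.1:ℚ)^8 else 0)
      = ∑ e ∈ n.divisors, (2*(e:ℚ)^11 - 66*(e:ℚ)^7 + 220*(e:ℚ)^5 - 231*(e:ℚ)^3 + 75*(e:ℚ))/990 := by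
  rw [diagsum n hn (fun a b => (a:ℚ)^2 * (b:ℚ)^8)]
  exact Finset.sum_congr rfl fun e _ => inner28 e

lemma inner37 (e : ℕ) : ∑ a ∈ Finset.Ico 1 e, (a:ℚ)^3 * (((e - a : ℕ)):ℚ)^7
    = ((e:ℚ)^11 + 11*(e:ℚ)^7 - 110*(e:ℚ)^5 + 198*(e:ℚ)^3 - 100*(e:ℚ))/1320 := by
  have h1 : ∑ a ∈ Finset.Ico 1 e, (a:ℚ)^3 * (((e - a : ℕ)):ℚ)^7
      = ∑ a ∈ Finset.Ico 1 e, (a:ℚ)^3 * ((e:ℚ) - (a:ℚ))^7 :=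
    Finset.sum_congr rfl fun a ha => by
      rw [Nat.cast_sub (le_of_lt (Finset.mem_Ico.mp ha).2)]
  rw [h1, ico_range _ (by norm_num) e]
  calc ∑ a ∈ Finset.range e, (a:ℚ)^3 * ((e:ℚ) - (a:ℚ))^7
      = ∑ a ∈ Finset.range e, (((e:ℚ)^7)*(a:ℚ)^3 + (-(7*(e:ℚ)^6))*(a:ℚ)^4 + (21*(e:ℚ)^5)*(a:ℚ)^5 + (-(35*(e:ℚ)^4))*(a:ℚ)^6 + (35*(e:ℚ)^3)*(a:ℚ)^7 + (-(21*(e:ℚ)^2))*(a:ℚ)^8 + (7*(e:ℚ))*(a:ℚ)^9 + (-1:ℚ)*(a:ℚ)^10) :=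
        Finset.sum_congr rfl fun a _ => by ring
    _ = ((e:ℚ)^11 + 11*(e:ℚ)^7 - 110*(e:ℚ)^5 + 198*(e:ℚ)^3 - 100*(e:ℚ))/1320 := by
        simp only [Finset.sum_add_distrib, ← Finset.mul_sum]
        rw [ps3, ps4, ps5, ps6, ps7, ps8, ps9, ps10]
        ring

lemma ev37 (n : ℕ) (hn : n ≠ 0) :
    (∑ p ∈ sol n, if p.2.2.1 = p.2.2.2 then (p.1:ℚ)^3 * (p.2.1:ℚ)^7 else 0)
      = ∑ e ∈ n.divisors, ((e:ℚ)^11 + 11*(e:ℚ)^7 - 110*(e:ℚ)^5 + 198*(e:ℚ)^3 - 100*(e:ℚ))/1320 := by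
  rw [diagsum n hn (fun a b => (a:ℚ)^3 * (b:ℚ)^7)]
  exact Finset.sum_congr rfl fun e _ => inner37 e

lemma inner46 (e : ℕ) : ∑ a ∈ Finset.Ico 1 e, (a:ℚ)^4 * (((e - a : ℕ)):ℚ)^6
    = ((e:ℚ)^11 + 55*(e:ℚ)^5 - 231*(e:ℚ)^3 + 175*(e:ℚ))/2310 := by
  have h1 : ∑ a ∈ Finset.Ico 1 e, (a:ℚ)^4 * (((e - a : ℕ)):ℚ)^6
      = ∑ a ∈ Finset.Ico 1 e, (a:ℚ)^4 * ((e:ℚ) - (a:ℚ))^6 :=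
    Finset.sum_congr rfl fun a ha => by
      rw [Nat.cast_sub (le_of_lt (Finset.mem_Ico.mp ha).2)]
  rw [h1, ico_range _ (by norm_num) e]
  calc ∑ a ∈ Finset.range e, (a:ℚ)^4 * ((e:ℚ) - (a:ℚ))^6
      = ∑ a ∈ Finset.range e, (((e:ℚ)^6)*(a:ℚ)^4 + (-(6*(e:ℚ)^5))*(a:ℚ)^5 + (15*(e:ℚ)^4)*(a:ℚ)^6 + (-(20*(e:ℚ)^3))*(a:ℚ)^7 + (15*(e:ℚ)^2)*(a:ℚ)^8 + (-(6*(e:ℚ)))*(a:ℚ)^9 + (1:ℚ)*(a:ℚ)^10) :=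
        Finset.sum_congr rfl fun a _ => by ring
    _ = ((e:ℚ)^11 + 55*(e:ℚ)^5 - 231*(e:ℚ)^3 + 175*(e:ℚ))/2310 := by
        simp only [Finset.sum_add_distrib, ← Finset.mul_sum]
        rw [ps4, ps5, ps6, ps7, ps8, ps9, ps10]
        ring

lemma ev46 (n : ℕ) (hn : n ≠ 0) :
    (∑ p ∈ sol n, if p.2.2.1 = p.2.2.2 then (p.1:ℚ)^4 * (p.2.1:ℚ)^6 else 0)
      = ∑ e ∈ n.divisors, ((e:ℚ)^11 + 55*(e:ℚ)^5 - 231*(e:ℚ)^3 + 175*(e:ℚ))/2310 := by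
  rw [diagsum n hn (fun a b => (a:ℚ)^4 * (b:ℚ)^6)]
  exact Finset.sum_congr rfl fun e _ => inner46 e

lemma inner55 (e : ℕ) : ∑ a ∈ Finset.Ico 1 e, (a:ℚ)^5 * (((e - a : ℕ)):ℚ)^5
    = ((e:ℚ)^11 - 22*(e:ℚ)^5 + 231*(e:ℚ)^3 - 210*(e:ℚ))/2772 := by
  have h1 : ∑ a ∈ Finset.Ico 1 e, (a:ℚ)^5 * (((e - a : ℕ)):ℚ)^5
      = ∑ a ∈ Finset.Ico 1 e, (a:ℚ)^5 * ((e:ℚ) - (a:ℚ))^5 :=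
    Finset.sum_congr rfl fun a ha => by
      rw [Nat.cast_sub (le_of_lt (Finset.mem_Ico.mp ha).2)]
  rw [h1, ico_range _ (by norm_num) e]
  calc ∑ a ∈ Finset.range e, (a:ℚ)^5 * ((e:ℚ) - (a:ℚ))^5
      = ∑ a ∈ Finset.range e, (((e:ℚ)^5)*(a:ℚ)^5 + (-(5*(e:ℚ)^4))*(a:ℚ)^6 + (10*(e:ℚ)^3)*(a:ℚ)^7 + (-(10*(e:ℚ)^2))*(a:ℚ)^8 + (5*(e:ℚ))*(a:ℚ)^9 + (-1:ℚ)*(a:ℚ)^10) :=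
        Finset.sum_congr rfl fun a _ => by ring
    _ = ((e:ℚ)^11 - 22*(e:ℚ)^5 + 231*(e:ℚ)^3 - 210*(e:ℚ))/2772 := by
        simp only [Finset.sum_add_distrib, ← Finset.mul_sum]
        rw [ps5, ps6, ps7, ps8, ps9, ps10]
        ring

lemma ev55 (n : ℕ) (hn : n ≠ 0) :
    (∑ p ∈ sol n, if p.2.2.1 = p.2.2.2 then (p.1:ℚ)^5 * (p.2.1:ℚ)^5 else 0)
      = ∑ e ∈ n.divisors, ((e:ℚ)^11 - 22*(e:ℚ)^5 + 231*(e:ℚ)^3 - 210*(e:ℚ))/2772 := by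
  rw [diagsum n hn (fun a b => (a:ℚ)^5 * (b:ℚ)^5)]
  exact Finset.sum_congr rfl fun e _ => inner55 e
section core

variable (n : ℕ)

lemma core6 (n : ℕ) :
    2 * ∑ p ∈ sol n, (p.1 : ℚ) ^ 3 * (p.2.1 : ℚ) ^ 3 =
      (∑ p ∈ sol n, if p.2.2.1 = p.2.2.2 then (p.1 : ℚ) ^ 2 * (p.2.1 : ℚ) ^ 4 else 0) +
      (∑ p ∈ sol n, if p.2.2.1 = p.2.2.2 then (p.1 : ℚ) ^ 3 * (p.2.1 : ℚ) ^ 3 else 0) := by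
  have h1 := R2 n 2 4
  have h2 := R2 n 3 3
  have h3 := R1 n 2 4 6 rfl
  have h4 := R1 n 3 3 6 rfl
  have hV :
      (∑ p ∈ sol n, if p.2.2.1 < p.2.2.2 then
          (p.1 : ℚ) ^ 2 * (p.2.1 : ℚ) ^ 4 + (p.1 : ℚ) ^ 4 * (p.2.1 : ℚ) ^ 2 else 0) +
      (∑ p ∈ sol n, if p.2.2.1 < p.2.2.2 then
          (p.1 : ℚ) ^ 3 * (p.2.1 : ℚ) ^ 3 + (p.1 : ℚ) ^ 3 * (p.2.1 : ℚ) ^ 3 else 0) -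
      (∑ p ∈ sol n, if p.2.2.1 < p.2.2.2 then
          ((p.1 : ℚ) + (p.2.1 : ℚ)) ^ 2 * (p.2.1 : ℚ) ^ 4 +
          (p.2.1 : ℚ) ^ 2 * ((p.1 : ℚ) + (p.2.1 : ℚ)) ^ 4 else 0) +
      (∑ p ∈ sol n, if p.2.2.1 < p.2.2.2 then
          ((p.1 : ℚ) + (p.2.1 : ℚ)) ^ 3 * (p.2.1 : ℚ) ^ 3 +
          (p.2.1 : ℚ) ^ 3 * ((p.1 : ℚ) + (p.2.1 : ℚ)) ^ 3 else 0) = 0 := by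
    rw [← Finset.sum_add_distrib, ← Finset.sum_sub_distrib, ← Finset.sum_add_distrib]
    refine Finset.sum_eq_zero fun p _ => ?_
    split_ifs <;> ring
  linear_combination h1 + h2 - h3 + h4 + hV

lemma core10 (n : ℕ) :
    80 * ∑ p ∈ sol n, (p.1 : ℚ) ^ 3 * (p.2.1 : ℚ) ^ 7 +
    100 * ∑ p ∈ sol n, (p.1 : ℚ) ^ 5 * (p.2.1 : ℚ) ^ 5 =
      10 * (∑ p ∈ sol n, if p.2.2.1 = p.2.2.2 then (p.1 : ℚ) ^ 2 * (p.2.1 : ℚ) ^ 8 else 0) +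
      40 * (∑ p ∈ sol n, if p.2.2.1 = p.2.2.2 then (p.1 : ℚ) ^ 3 * (p.2.1 : ℚ) ^ 7 else 0) +
      80 * (∑ p ∈ sol n, if p.2.2.1 = p.2.2.2 then (p.1 : ℚ) ^ 4 * (p.2.1 : ℚ) ^ 6 else 0) +
      50 * (∑ p ∈ sol n, if p.2.2.1 = p.2.2.2 then (p.1 : ℚ) ^ 5 * (p.2.1 : ℚ) ^ 5 else 0) := by
  have h1 := R2 n 2 8
  have h2 := R2 n 3 7
  have h3 := R2 n 4 6
  have h4 := R2 n 5 5
  have g1 := R1 n 2 8 10 rfl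
  have g2 := R1 n 3 7 10 rfl
  have g3 := R1 n 4 6 10 rfl
  have g4 := R1 n 5 5 10 rfl
  have hV :
      10 * (∑ p ∈ sol n, if p.2.2.1 < p.2.2.2 then
          (p.1 : ℚ) ^ 2 * (p.2.1 : ℚ) ^ 8 + (p.1 : ℚ) ^ 8 * (p.2.1 : ℚ) ^ 2 else 0) +
      40 * (∑ p ∈ sol n, if p.2.2.1 < p.2.2.2 then
          (p.1 : ℚ) ^ 3 * (p.2.1 : ℚ) ^ 7 + (p.1 : ℚ) ^ 7 * (p.2.1 : ℚ) ^ 3 else 0) +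
      80 * (∑ p ∈ sol n, if p.2.2.1 < p.2.2.2 then
          (p.1 : ℚ) ^ 4 * (p.2.1 : ℚ) ^ 6 + (p.1 : ℚ) ^ 6 * (p.2.1 : ℚ) ^ 4 else 0) +
      50 * (∑ p ∈ sol n, if p.2.2.1 < p.2.2.2 then
          (p.1 : ℚ) ^ 5 * (p.2.1 : ℚ) ^ 5 + (p.1 : ℚ) ^ 5 * (p.2.1 : ℚ) ^ 5 else 0) -
      10 * (∑ p ∈ sol n, if p.2.2.1 < p.2.2.2 then
          ((p.1 : ℚ) + (p.2.1 : ℚ)) ^ 2 * (p.2.1 : ℚ) ^ 8 +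
          (p.2.1 : ℚ) ^ 2 * ((p.1 : ℚ) + (p.2.1 : ℚ)) ^ 8 else 0) +
      40 * (∑ p ∈ sol n, if p.2.2.1 < p.2.2.2 then
          ((p.1 : ℚ) + (p.2.1 : ℚ)) ^ 3 * (p.2.1 : ℚ) ^ 7 +
          (p.2.1 : ℚ) ^ 3 * ((p.1 : ℚ) + (p.2.1 : ℚ)) ^ 7 else 0) -
      80 * (∑ p ∈ sol n, if p.2.2.1 < p.2.2.2 then
          ((p.1 : ℚ) + (p.2.1 : ℚ)) ^ 4 * (p.2.1 : ℚ) ^ 6 +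
          (p.2.1 : ℚ) ^ 4 * ((p.1 : ℚ) + (p.2.1 : ℚ)) ^ 6 else 0) +
      50 * (∑ p ∈ sol n, if p.2.2.1 < p.2.2.2 then
          ((p.1 : ℚ) + (p.2.1 : ℚ)) ^ 5 * (p.2.1 : ℚ) ^ 5 +
          (p.2.1 : ℚ) ^ 5 * ((p.1 : ℚ) + (p.2.1 : ℚ)) ^ 5 else 0) = 0 := by
    simp only [Finset.mul_sum, ← Finset.sum_add_distrib, ← Finset.sum_sub_distrib]
    refine Finset.sum_eq_zero fun p _ => ?_
    split_ifs <;> ring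
  linear_combination 10 * h1 + 40 * h2 + 80 * h3 + 50 * h4 - 10 * g1 + 40 * g2 - 80 * g3 +
    50 * g4 + hV

lemma core6' (n : ℕ) (hn : n ≠ 0) :
    120 * ∑ p ∈ sol n, (p.1 : ℚ) ^ 3 * (p.2.1 : ℚ) ^ 3 =
      ∑ e ∈ n.divisors, ((e : ℚ) ^ 7 - (e : ℚ) ^ 3) := by
  have hc := core6 n
  rw [ev24 n hn, ev33 n hn] at hc
  calc 120 * ∑ p ∈ sol n, (p.1 : ℚ) ^ 3 * (p.2.1 : ℚ) ^ 3
      = 60 * ((∑ e ∈ n.divisors, (2*(e:ℚ)^7 - 7*(e:ℚ)^3 + 5*(e:ℚ))/210) +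
          (∑ e ∈ n.divisors, (3*(e:ℚ)^7 + 7*(e:ℚ)^3 - 10*(e:ℚ))/420)) := by
        linear_combination 60 * hc
    _ = ∑ e ∈ n.divisors, ((e : ℚ) ^ 7 - (e : ℚ) ^ 3) := by
        rw [← Finset.sum_add_distrib, Finset.mul_sum]
        exact Finset.sum_congr rfl fun e _ => by ring

lemma core10' (n : ℕ) (hn : n ≠ 0) :
    10080 * ∑ p ∈ sol n, (p.1 : ℚ) ^ 3 * (p.2.1 : ℚ) ^ 7 +
    12600 * ∑ p ∈ sol n, (p.1 : ℚ) ^ 5 * (p.2.1 : ℚ) ^ 5 =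
      ∑ e ∈ n.divisors, (13*(e:ℚ)^11 - 42*(e:ℚ)^7 + 50*(e:ℚ)^5 - 21*(e:ℚ)^3) := by
  have hc := core10 n
  rw [ev28 n hn, ev37 n hn, ev46 n hn, ev55 n hn] at hc
  calc 10080 * ∑ p ∈ sol n, (p.1 : ℚ) ^ 3 * (p.2.1 : ℚ) ^ 7 +
      12600 * ∑ p ∈ sol n, (p.1 : ℚ) ^ 5 * (p.2.1 : ℚ) ^ 5
      = 126 * (10 * (∑ e ∈ n.divisors, (2*(e:ℚ)^11 - 66*(e:ℚ)^7 + 220*(e:ℚ)^5 - 231*(e:ℚ)^3 + 75*(e:ℚ))/990) +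
          40 * (∑ e ∈ n.divisors, ((e:ℚ)^11 + 11*(e:ℚ)^7 - 110*(e:ℚ)^5 + 198*(e:ℚ)^3 - 100*(e:ℚ))/1320) +
          80 * (∑ e ∈ n.divisors, ((e:ℚ)^11 + 55*(e:ℚ)^5 - 231*(e:ℚ)^3 + 175*(e:ℚ))/2310) +
          50 * (∑ e ∈ n.divisors, ((e:ℚ)^11 - 22*(e:ℚ)^5 + 231*(e:ℚ)^3 - 210*(e:ℚ))/2772)) := by
        linear_combination 126 * hc
    _ = ∑ e ∈ n.divisors, (13*(e:ℚ)^11 - 42*(e:ℚ)^7 + 50*(e:ℚ)^5 - 21*(e:ℚ)^3) := by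
        simp only [Finset.mul_sum, ← Finset.sum_add_distrib]
        exact Finset.sum_congr rfl fun e _ => by ring

end core

/-- The `q`-expansion of `E₄` over `ℚ`. -/
def E4 : PowerSeries ℚ :=
  PowerSeries.mk fun n => if n = 0 then 1 else 240 * ∑ d ∈ n.divisors, (d : ℚ) ^ 3

/-- The `q`-expansion of `E₆` over `ℚ`. -/
def E6 : PowerSeries ℚ :=
  PowerSeries.mk fun n => if n = 0 then 1 else -504 * ∑ d ∈ n.divisors, (d : ℚ) ^ 5

/-- The `q`-expansion of `E₁₂` over `ℚ`. -/
def E12 : PowerSeries ℚ :=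
  PowerSeries.mk fun n =>
    if n = 0 then 1 else (65520 / 691) * ∑ d ∈ n.divisors, (d : ℚ) ^ 11

/-- The Lambert-type series `∑_{m ≥ 1} σ_k(m) q^m`. -/
def L (k : ℕ) : PowerSeries ℚ :=
  PowerSeries.mk fun m => if m = 0 then 0 else ∑ d ∈ m.divisors, (d : ℚ) ^ k

lemma coeffL (k u : ℕ) :
    PowerSeries.coeff u (L k) = ∑ i ∈ u.divisorsAntidiagonal, (i.1 : ℚ) ^ k := by
  rw [L, PowerSeries.coeff_mk]
  rcases eq_or_ne u 0 with rfl | hu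
  · simp
  · rw [if_neg hu, ← Nat.sum_divisorsAntidiagonal (fun d e => (d : ℚ) ^ k)]

lemma Wlem (r s n : ℕ) :
    PowerSeries.coeff n (L r * L s) = ∑ p ∈ sol n, (p.1 : ℚ) ^ r * (p.2.1 : ℚ) ^ s := by
  rw [PowerSeries.coeff_mul, Finset.Nat.sum_antidiagonal_eq_sum_range_succ_mk]
  simp only [coeffL]
  rw [← Finset.sum_fiberwise_of_maps_to (g := fun p : ℕ × ℕ × ℕ × ℕ => p.1 * p.2.2.1)
    (t := Finset.range (n + 1)) ?_ (fun p => (p.1 : ℚ) ^ r * (p.2.1 : ℚ) ^ s)]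
  swap
  · intro p hp
    rw [mem_sol] at hp
    obtain ⟨ha, hb, hx, hy, he⟩ := hp
    have h1 : 1 ≤ p.2.1 * p.2.2.2 := Nat.one_le_iff_ne_zero.mpr (Nat.mul_ne_zero (by omega) (by omega))
    simp only [Finset.mem_range]
    omega
  refine Finset.sum_congr rfl fun u hu => ?_
  rw [Finset.sum_mul_sum, ← Finset.sum_product']
  refine Finset.sum_nbij' (fun q => (q.1.1, q.2.1, q.1.2, q.2.2))
    (fun p => ((p.1, p.2.2.1), (p.2.1, p.2.2.2))) ?_ ?_ ?_ ?_ ?_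
  · rintro ⟨⟨d, x⟩, ⟨e, y⟩⟩ h
    simp only [Finset.mem_product, Nat.mem_divisorsAntidiagonal] at h
    obtain ⟨⟨hdx, hu0⟩, ⟨hey, hv0⟩⟩ := h
    simp only [Finset.mem_range] at hu
    simp only [Finset.mem_filter, mem_sol]
    have h1 : d ≠ 0 ∧ x ≠ 0 := by
      constructor <;> rintro rfl <;> simp_all
    have h2 : e ≠ 0 ∧ y ≠ 0 := by
      constructor <;> rintro rfl <;> simp_all
    refine ⟨⟨by omega, by omega, by omega, by omega, by omega⟩, hdx⟩
  · rintro ⟨a, b, x, y⟩ h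
    simp only [Finset.mem_filter, mem_sol] at h
    obtain ⟨⟨ha, hb, hx, hy, he⟩, hax⟩ := h
    simp only [Finset.mem_product, Nat.mem_divisorsAntidiagonal]
    have h1 : 1 ≤ a * x := Nat.one_le_iff_ne_zero.mpr (Nat.mul_ne_zero (by omega) (by omega))
    have h2 : 1 ≤ b * y := Nat.one_le_iff_ne_zero.mpr (Nat.mul_ne_zero (by omega) (by omega))
    exact ⟨⟨hax, by omega⟩, by omega, by omega⟩
  · rintro ⟨⟨d, x⟩, ⟨e, y⟩⟩ h
    rfl
  · rintro ⟨a, b, x, y⟩ h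
    rfl
  · rintro ⟨⟨d, x⟩, ⟨e, y⟩⟩ h
    rfl

lemma sol_zero : sol 0 = ∅ := by
  rw [Finset.eq_empty_iff_forall_notMem]
  intro p hp
  rw [mem_sol] at hp
  obtain ⟨ha, hb, hx, hy, he⟩ := hp
  have h1 : 1 ≤ p.1 * p.2.2.1 := Nat.one_le_iff_ne_zero.mpr (Nat.mul_ne_zero (by omega) (by omega))
  omega

lemma c240 : (240 : PowerSeries ℚ) = PowerSeries.C (R := ℚ) 240 := (map_ofNat _ _).symm

lemma E4L : E4 = 1 + 240 * L 3 := by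
  ext n
  rw [map_add, c240, PowerSeries.coeff_C_mul, E4, L, PowerSeries.coeff_mk,
    PowerSeries.coeff_mk, PowerSeries.coeff_one]
  rcases eq_or_ne n 0 with rfl | hn
  · norm_num
  · rw [if_neg hn, if_neg hn, if_neg hn, zero_add]

lemma E6L : E6 = 1 + (-504 : PowerSeries ℚ) * L 5 := by
  ext n
  rw [map_add, show ((-504 : PowerSeries ℚ)) = PowerSeries.C (R := ℚ) (-504) from by
      rw [map_neg, map_ofNat], PowerSeries.coeff_C_mul, E6, L, PowerSeries.coeff_mk,
    PowerSeries.coeff_mk, PowerSeries.coeff_one]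
  rcases eq_or_ne n 0 with rfl | hn
  · norm_num
  · rw [if_neg hn, if_neg hn, if_neg hn, zero_add]

lemma e12L : (691 : PowerSeries ℚ) * E12 = 691 + 65520 * L 11 := by
  ext n
  rw [map_add, show ((691 : PowerSeries ℚ)) = PowerSeries.C (R := ℚ) 691 from (map_ofNat _ _).symm,
    show ((65520 : PowerSeries ℚ)) = PowerSeries.C (R := ℚ) 65520 from (map_ofNat _ _).symm,
    PowerSeries.coeff_C_mul, PowerSeries.coeff_C_mul, E12, L, PowerSeries.coeff_mk,
    PowerSeries.coeff_mk, PowerSeries.coeff_C]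
  rcases eq_or_ne n 0 with rfl | hn
  · norm_num
  · rw [if_neg hn, if_neg hn, if_neg hn]
    norm_num
    ring


/-- The weight-8 Eisenstein identity `E₄² = E₈`, in Lambert-series form. -/
lemma sq3 : (120 : PowerSeries ℚ) * (L 3 * L 3) = L 7 - L 3 := by
  ext n
  rw [map_sub, show ((120 : PowerSeries ℚ)) = PowerSeries.C (R := ℚ) 120 from (map_ofNat _ _).symm,
    PowerSeries.coeff_C_mul, Wlem 3 3 n]
  rcases eq_or_ne n 0 with rfl | hn
  · simp [sol_zero, L]
  · rw [L, L, PowerSeries.coeff_mk, PowerSeries.coeff_mk, if_neg hn, if_neg hn,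
      ← Finset.sum_sub_distrib]
    exact core6' n hn

/-- The weight-12 Eisenstein identity, in Lambert-series form. -/
lemma big : (10080 : PowerSeries ℚ) * (L 3 * L 7) + 12600 * (L 5 * L 5) =
    13 * L 11 - 21 * L 3 + 50 * L 5 - 42 * L 7 := by
  ext n
  simp only [map_add, map_sub]
  rw [
    show ((10080 : PowerSeries ℚ)) = PowerSeries.C (R := ℚ) 10080 from (map_ofNat _ _).symm,
    show ((12600 : PowerSeries ℚ)) = PowerSeries.C (R := ℚ) 12600 from (map_ofNat _ _).symm,
    show ((13 : PowerSeries ℚ)) = PowerSeries.C (R := ℚ) 13 from (map_ofNat _ _).symm,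
    show ((21 : PowerSeries ℚ)) = PowerSeries.C (R := ℚ) 21 from (map_ofNat _ _).symm,
    show ((50 : PowerSeries ℚ)) = PowerSeries.C (R := ℚ) 50 from (map_ofNat _ _).symm,
    show ((42 : PowerSeries ℚ)) = PowerSeries.C (R := ℚ) 42 from (map_ofNat _ _).symm,
    PowerSeries.coeff_C_mul, PowerSeries.coeff_C_mul, PowerSeries.coeff_C_mul,
    PowerSeries.coeff_C_mul, PowerSeries.coeff_C_mul, PowerSeries.coeff_C_mul,
    Wlem 3 7 n, Wlem 5 5 n]
  rcases eq_or_ne n 0 with rfl | hn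
  · simp [sol_zero, L]
  · rw [L, L, L, L, PowerSeries.coeff_mk, PowerSeries.coeff_mk, PowerSeries.coeff_mk,
      PowerSeries.coeff_mk, if_neg hn, if_neg hn, if_neg hn, if_neg hn]
    have h := core10' n hn
    have hsplit : ∑ e ∈ n.divisors, (13*(e:ℚ)^11 - 42*(e:ℚ)^7 + 50*(e:ℚ)^5 - 21*(e:ℚ)^3) =
        13 * ∑ d ∈ n.divisors, (d:ℚ)^11 - 21 * ∑ d ∈ n.divisors, (d:ℚ)^3 +
        50 * ∑ d ∈ n.divisors, (d:ℚ)^5 - 42 * ∑ d ∈ n.divisors, (d:ℚ)^7 := by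
      simp only [Finset.mul_sum, ← Finset.sum_add_distrib, ← Finset.sum_sub_distrib]
      exact Finset.sum_congr rfl fun e _ => by ring
    linear_combination h + hsplit

/-- In `ℚ[[q]]`, `691 E₁₂ = 441 E₄³ + 250 E₆²`. -/
theorem e12_relation : 691 * E12 = 441 * E4 ^ 3 + 250 * E6 ^ 2 := by
  rw [E4L, E6L]
  linear_combination e12L - (50803200 * L 3 + 211680) * sq3 - 5040 * big
end
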